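/- arXiv:1605.07239 — 11 statements merged into one kernel-verified Lean document; each statement's English description precedes it below -/
import Mathlib

section
/- Let A be an n×n real symmetric matrix with entries a_{ij}. For every real x ≤ 0 and every eigenvalue λ of A, one has λ ≤ max_{1≤i≤n} D_i(A,x), where D_i(A,x) = a_{ii} − x + Σ_{j≠i} |a_{ij} − x|. In particular λ_max(A) ≤ inf_{x≤0} max_i D_i(A,x) (the shifted Gershgorin upper bound). -/
/-- The shifted Gershgorin row function D_i(A,x) = a_{ii} − x + Σ_{j≠i} |a_{ij} − x|. -/
noncomputable def gershUpper (n : ℕ) (A : Matrix (Fin n) (Fin n) ℝ) (x : ℝ) (i : Fin n) : ℝ :=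
  A i i - x + ∑ j ∈ Finset.univ.erase i, |A i j - x|

lemma gersh_key (n : ℕ) (hn : 0 < n) (A : Matrix (Fin n) (Fin n) ℝ) (hA : A.IsHermitian)
    (x : ℝ) (hx : x ≤ 0) (μ : ℝ) (hμ : μ ∈ spectrum ℝ A) :
    μ ≤ ⨆ i, gershUpper n A x i := by
  haveI : Nonempty (Fin n) := ⟨⟨0, hn⟩⟩
  -- symmetry
  have hsymm : ∀ i j, A j i = A i j := by
    intro i j
    have := hA.apply i j
    simpa using this
  -- obtain an eigenvector
  have hnu : ¬ IsUnit (μ • (1 : Matrix (Fin n) (Fin n) ℝ) - A) := by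
    rw [spectrum.mem_iff] at hμ
    simpa [Algebra.algebraMap_eq_smul_one] using hμ
  have hdet : (μ • (1 : Matrix (Fin n) (Fin n) ℝ) - A).det = 0 := by
    by_contra h
    exact hnu ((Matrix.isUnit_iff_isUnit_det _).2 (isUnit_iff_ne_zero.2 h))
  obtain ⟨v, hv0, hv⟩ := (Matrix.exists_mulVec_eq_zero_iff).2 hdet
  have hAv : A.mulVec v = μ • v := by
    rw [Matrix.sub_mulVec, sub_eq_zero, Matrix.smul_mulVec, Matrix.one_mulVec] at hv
    exact hv.symm
  set S := ⨆ i, gershUpper n A x i with hS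
  have hle : ∀ i, gershUpper n A x i ≤ S :=
    fun i => le_ciSup (Set.Finite.bddAbove (Set.finite_range _)) i
  -- norm
  set N := ∑ i, v i ^ 2 with hN
  have hNpos : 0 < N := by
    obtain ⟨i0, hi0⟩ := Function.ne_iff.1 hv0
    refine Finset.sum_pos' (fun i _ => sq_nonneg _) ⟨i0, Finset.mem_univ _, ?_⟩
    simpa using pow_pos (abs_pos.2 hi0) 2 |>.trans_eq (by rw [sq_abs])
  have hcomp : ∀ i, (∑ j, A i j * v j) = μ * v i := by
    intro i
    have := congrFun hAv i
    simpa [Matrix.mulVec, dotProduct] using this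
  have hmul : μ * N = ∑ i, ∑ j, A i j * v j * v i := by
    rw [hN, Finset.mul_sum]
    refine Finset.sum_congr rfl fun i _ => ?_
    rw [← Finset.sum_mul, hcomp i]; ring
  -- split off the shift
  have hsplit : μ * N = (∑ i, ∑ j, (A i j - x) * v j * v i) + x * (∑ i, v i) ^ 2 := by
    rw [hmul]
    have : (∑ i, v i) ^ 2 = ∑ i, ∑ j, v j * v i := by
      rw [sq, Finset.sum_mul_sum]
      exact Finset.sum_congr rfl fun i _ => Finset.sum_congr rfl fun j _ => mul_comm _ _
    rw [this, Finset.mul_sum, ← Finset.sum_add_distrib]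
    refine Finset.sum_congr rfl fun i _ => ?_
    rw [Finset.mul_sum, ← Finset.sum_add_distrib]
    exact Finset.sum_congr rfl fun j _ => by ring
  have hx2 : x * (∑ i, v i) ^ 2 ≤ 0 := mul_nonpos_of_nonpos_of_nonneg hx (sq_nonneg _)
  -- bound the main double sum
  have hterm : ∀ i j, (A i j - x) * v j * v i ≤ |A i j - x| * ((v j ^ 2 + v i ^ 2) / 2) := by
    intro i j
    calc (A i j - x) * v j * v i ≤ |(A i j - x) * v j * v i| := le_abs_self _
      _ = |A i j - x| * (|v j| * |v i|) := by rw [abs_mul, abs_mul, mul_assoc]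
      _ ≤ |A i j - x| * ((v j ^ 2 + v i ^ 2) / 2) := by
          refine mul_le_mul_of_nonneg_left ?_ (abs_nonneg _)
          nlinarith [sq_nonneg (|v j| - |v i|), sq_abs (v j), sq_abs (v i),
            abs_nonneg (v i), abs_nonneg (v j)]
  have hswap : (∑ i, ∑ j ∈ Finset.univ.erase i, |A i j - x| * v j ^ 2)
      = ∑ i, ∑ j ∈ Finset.univ.erase i, |A i j - x| * v i ^ 2 := by
    rw [Finset.sum_comm' (t' := Finset.univ) (s' := fun j => Finset.univ.erase j)
      (by intro i j; simp [eq_comm, ne_comm, and_comm])]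
    refine Finset.sum_congr rfl fun i _ => Finset.sum_congr rfl fun j hj => ?_
    rw [hsymm i j]
  have hmain : (∑ i, ∑ j, (A i j - x) * v j * v i) ≤ ∑ i, gershUpper n A x i * v i ^ 2 := by
    have step1 : ∀ i, (∑ j, (A i j - x) * v j * v i)
        ≤ (A i i - x) * v i ^ 2 + ∑ j ∈ Finset.univ.erase i, |A i j - x| * ((v j ^ 2 + v i ^ 2) / 2) := by
      intro i
      rw [← Finset.add_sum_erase (Finset.univ) _ (Finset.mem_univ i)]
      have : (A i i - x) * v i * v i = (A i i - x) * v i ^ 2 := by ring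
      rw [this]
      exact add_le_add_right (Finset.sum_le_sum fun j _ => hterm i j) _
    calc (∑ i, ∑ j, (A i j - x) * v j * v i)
        ≤ ∑ i, ((A i i - x) * v i ^ 2 + ∑ j ∈ Finset.univ.erase i, |A i j - x| * ((v j ^ 2 + v i ^ 2) / 2)) :=
          Finset.sum_le_sum fun i _ => step1 i
      _ = ∑ i, gershUpper n A x i * v i ^ 2 := by
          have expand : ∀ i, (∑ j ∈ Finset.univ.erase i, |A i j - x| * ((v j ^ 2 + v i ^ 2) / 2))
              = (∑ j ∈ Finset.univ.erase i, |A i j - x| * v j ^ 2) / 2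
                + (∑ j ∈ Finset.univ.erase i, |A i j - x| * v i ^ 2) / 2 := by
            intro i
            rw [Finset.sum_div, Finset.sum_div, ← Finset.sum_add_distrib]
            exact Finset.sum_congr rfl fun j _ => by ring
          simp_rw [expand]
          rw [Finset.sum_add_distrib, Finset.sum_add_distrib, ← Finset.sum_div, ← Finset.sum_div,
            hswap, add_halves, ← Finset.sum_add_distrib]
          refine Finset.sum_congr rfl fun i _ => ?_
          rw [gershUpper, add_mul, Finset.sum_mul]
    -- done
  have hfinal : μ * N ≤ S * N := by
    calc μ * N ≤ ∑ i, gershUpper n A x i * v i ^ 2 := by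
          rw [hsplit]
          have := add_le_add hmain hx2
          simpa using this
      _ ≤ ∑ i, S * v i ^ 2 :=
          Finset.sum_le_sum fun i _ => mul_le_mul_of_nonneg_right (hle i) (sq_nonneg _)
      _ = S * N := by rw [hN, Finset.mul_sum]
  exact le_of_mul_le_mul_right hfinal hNpos

/-- For every x ≤ 0, every eigenvalue of a real symmetric matrix A is at most
max_i D_i(A,x); in particular λ_max(A) ≤ inf_{x ≤ 0} max_i D_i(A,x). -/
theorem shifted_gershgorin_upper (n : ℕ) (hn : 0 < n)
    (A : Matrix (Fin n) (Fin n) ℝ) (hA : A.IsHermitian) :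
    (∀ x : ℝ, x ≤ 0 → ∀ μ ∈ spectrum ℝ A, μ ≤ ⨆ i, gershUpper n A x i) ∧
    (⨆ i, hA.eigenvalues i) ≤ ⨅ x : {x : ℝ // x ≤ 0}, ⨆ i, gershUpper n A x.1 i := by
  haveI : Nonempty (Fin n) := ⟨⟨0, hn⟩⟩
  haveI : Nonempty {x : ℝ // x ≤ 0} := ⟨⟨0, le_refl 0⟩⟩
  refine ⟨fun x hx μ hμ => gersh_key n hn A hA x hx μ hμ, ?_⟩
  refine le_ciInf fun x => ciSup_le fun i => ?_
  exact gersh_key n hn A hA x.1 x.2 _ (hA.eigenvalues_mem_spectrum_real i)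
end

section
/- Let A be an n×n real symmetric matrix. Then for every real x, min_{1≤i≤n} d_i(A,x) = min_{1≤k≤n} (r_k x + s_k) and max_{1≤i≤n} D_i(A,x) = max_{1≤k≤n} (R_k x + S_k). In other words, the lower (resp. upper) shifted Gershgorin bounding function is a single piecewise-linear function cut out by the n lines x ↦ r_k x + s_k (resp. x ↦ R_k x + S_k). -/
/-- The shifted Gershgorin row function d_i(A,x) = a_{ii} − x − Σ_{j≠i} |a_{ij} − x|. -/
noncomputable def gershLower (n : ℕ) (A : Matrix (Fin n) (Fin n) ℝ) (x : ℝ) (i : Fin n) : ℝ :=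
  A i i - x - ∑ j ∈ Finset.univ.erase i, |A i j - x|

/-- `δ_{i,k} = Σ_{j<k} y_j − Σ_{j≥k} y_j` for the sorted off-diagonal entries `y i` of
row `i` (here `k : Fin n` has paper index `k+1`). -/
noncomputable def deltaIK (n : ℕ) (y : Fin n → Fin (n - 1) → ℝ) (i : Fin n) (k : Fin n) : ℝ :=
  (∑ j ∈ Finset.univ.filter (fun j : Fin (n - 1) => (j : ℕ) < (k : ℕ)), y i j) -
  (∑ j ∈ Finset.univ.filter (fun j : Fin (n - 1) => (k : ℕ) ≤ (j : ℕ)), y i j)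

open Finset

lemma card_filter_val_lt (m c : ℕ) (hc : c ≤ m) :
    (Finset.univ.filter fun j : Fin m => (j : ℕ) < c).card = c := by
  have h : (Finset.univ.filter fun j : Fin m => (j : ℕ) < c)
      = Finset.map (Fin.castLEEmb hc) Finset.univ := by
    ext j
    simp only [Finset.mem_filter, Finset.mem_univ, true_and, Finset.mem_map,
      Fin.castLEEmb_apply]
    constructor
    · intro h; exact ⟨⟨j, h⟩, rfl⟩
    · rintro ⟨a, rfl⟩; exact a.isLt
  rw [h, Finset.card_map, Finset.card_univ, Fintype.card_fin]

lemma filter_index_iff (m : ℕ) (g : Fin m → ℝ) (hg : Monotone g) (x : ℝ) (j : Fin m) :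
    (j : ℕ) < (Finset.univ.filter fun j' : Fin m => g j' < x).card ↔ g j < x := by
  constructor
  · intro h
    by_contra hx
    push_neg at hx
    have hsub : (Finset.univ.filter fun j' : Fin m => g j' < x)
        ⊆ Finset.univ.filter fun j' : Fin m => (j' : ℕ) < (j : ℕ) := by
      intro j' hj'
      simp only [Finset.mem_filter, Finset.mem_univ, true_and] at hj' ⊢
      by_contra hlt
      push_neg at hlt
      have : g j ≤ g j' := hg (Fin.le_def.mpr hlt)
      linarith
    have := Finset.card_le_card hsub
    rw [card_filter_val_lt m j (le_of_lt j.isLt)] at this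
    omega
  · intro h
    have hsub : (Finset.univ.filter fun j' : Fin m => (j' : ℕ) < (j : ℕ) + 1)
        ⊆ Finset.univ.filter fun j' : Fin m => g j' < x := by
      intro j' hj'
      simp only [Finset.mem_filter, Finset.mem_univ, true_and] at hj' ⊢
      have : g j' ≤ g j := hg (Fin.le_def.mpr (Nat.lt_succ_iff.mp hj'))
      linarith
    have := Finset.card_le_card hsub
    rw [card_filter_val_lt m ((j : ℕ) + 1) j.isLt] at this
    omega

lemma keyInf (n : ℕ) (hn : 0 < n) (g : Fin (n - 1) → ℝ) (hg : Monotone g) (x : ℝ) :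
    (- x - ∑ j, |g j - x|) =
    ⨅ k : Fin n, (((n : ℝ) - 2 * ((k : ℕ) + 1)) * x +
      ((∑ j ∈ Finset.univ.filter (fun j : Fin (n - 1) => (j : ℕ) < (k : ℕ)), g j) -
       (∑ j ∈ Finset.univ.filter (fun j : Fin (n - 1) => (k : ℕ) ≤ (j : ℕ)), g j))) := by
  haveI : Nonempty (Fin n) := Fin.pos_iff_nonempty.mp hn
  have hmr : ((n - 1 : ℕ) : ℝ) = (n : ℝ) - 1 := Nat.cast_pred hn
  set F : Fin n → ℝ := fun k => (((n : ℝ) - 2 * ((k : ℕ) + 1)) * x +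
      ((∑ j ∈ Finset.univ.filter (fun j : Fin (n - 1) => (j : ℕ) < (k : ℕ)), g j) -
       (∑ j ∈ Finset.univ.filter (fun j : Fin (n - 1) => (k : ℕ) ≤ (j : ℕ)), g j))) with hF
  have key : ∀ c : ℕ, c ≤ n - 1 →
      ((∑ j ∈ Finset.univ.filter (fun j : Fin (n - 1) => (j : ℕ) < c), (x - g j)) +
       (∑ j ∈ Finset.univ.filter (fun j : Fin (n - 1) => ¬ (j : ℕ) < c), (g j - x)))
      = ((c : ℝ) - (((n - 1 : ℕ) : ℝ) - c)) * x
        - (∑ j ∈ Finset.univ.filter (fun j : Fin (n - 1) => (j : ℕ) < c), g j)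
        + (∑ j ∈ Finset.univ.filter (fun j : Fin (n - 1) => ¬ (j : ℕ) < c), g j) := by
    intro c hc
    have h1 : (Finset.univ.filter fun j : Fin (n - 1) => (j : ℕ) < c).card = c :=
      card_filter_val_lt (n - 1) c hc
    have h2 : (Finset.univ.filter fun j : Fin (n - 1) => ¬ (j : ℕ) < c).card = n - 1 - c := by
      have := Finset.card_filter_add_card_filter_not
        (s := (Finset.univ : Finset (Fin (n - 1)))) (p := fun j : Fin (n - 1) => (j : ℕ) < c)
      rw [h1, Finset.card_univ, Fintype.card_fin] at this
      omega
    have h3 : ((n - 1 - c : ℕ) : ℝ) = ((n - 1 : ℕ) : ℝ) - c := by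
      rw [Nat.cast_sub hc]
    rw [Finset.sum_sub_distrib, Finset.sum_sub_distrib, Finset.sum_const, Finset.sum_const,
      h1, h2]
    simp only [nsmul_eq_mul]
    rw [h3]
    ring
  apply le_antisymm
  · apply le_ciInf
    intro k
    have hk : (k : ℕ) ≤ n - 1 := Nat.le_pred_of_lt k.isLt
    have hQ : (Finset.univ.filter fun j : Fin (n - 1) => (k : ℕ) ≤ (j : ℕ))
        = Finset.univ.filter fun j : Fin (n - 1) => ¬ (j : ℕ) < (k : ℕ) := by
      simp only [not_lt]
    have hsplit := Finset.sum_filter_add_sum_filter_not Finset.univ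
      (fun j : Fin (n - 1) => (j : ℕ) < (k : ℕ)) (fun j => |g j - x|)
    have hs1 := Finset.sum_le_sum (fun j (_ : j ∈ Finset.univ.filter
        (fun j : Fin (n - 1) => (j : ℕ) < (k : ℕ))) =>
      (by rw [abs_sub_comm]; exact le_abs_self _ : x - g j ≤ |g j - x|))
    have hs2 := Finset.sum_le_sum (fun j (_ : j ∈ Finset.univ.filter
        (fun j : Fin (n - 1) => ¬ (j : ℕ) < (k : ℕ))) =>
      (le_abs_self _ : g j - x ≤ |g j - x|))
    have hkey := key (k : ℕ) hk
    rw [hmr] at hkey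
    simp only [hF, hQ]
    linarith
  · set S := Finset.univ.filter fun j : Fin (n - 1) => g j < x with hS
    have hcard : S.card ≤ n - 1 := le_trans (Finset.card_le_card (Finset.filter_subset _ _))
      (by rw [Finset.card_univ, Fintype.card_fin])
    set k₀ : Fin n := ⟨S.card, by omega⟩ with hk₀
    have hP : (Finset.univ.filter fun j : Fin (n - 1) => (j : ℕ) < (k₀ : ℕ)) = S := by
      apply Finset.filter_congr
      intro j _
      simpa using (filter_index_iff (n - 1) g hg x j)
    have hQ' : (Finset.univ.filter fun j : Fin (n - 1) => ¬ (j : ℕ) < (k₀ : ℕ))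
        = Finset.univ.filter fun j : Fin (n - 1) => ¬ g j < x := by
      rw [Finset.filter_not, Finset.filter_not, hP, hS]
    have hQ : (Finset.univ.filter fun j : Fin (n - 1) => (k₀ : ℕ) ≤ (j : ℕ))
        = Finset.univ.filter fun j : Fin (n - 1) => ¬ g j < x := by
      rw [← hQ']
      simp only [not_lt]
    have hsplit := Finset.sum_filter_add_sum_filter_not Finset.univ
      (fun j : Fin (n - 1) => g j < x) (fun j => |g j - x|)
    have e1 : ∑ j ∈ S, |g j - x| = ∑ j ∈ S, (x - g j) := by
      apply Finset.sum_congr rfl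
      intro j hj
      rw [hS, Finset.mem_filter] at hj
      rw [abs_of_neg (by linarith [hj.2])]; ring
    have e2 : ∑ j ∈ Finset.univ.filter (fun j : Fin (n - 1) => ¬ g j < x), |g j - x|
        = ∑ j ∈ Finset.univ.filter (fun j : Fin (n - 1) => ¬ g j < x), (g j - x) := by
      apply Finset.sum_congr rfl
      intro j hj
      simp only [Finset.mem_filter, not_lt] at hj
      rw [abs_of_nonneg (by linarith [hj.2])]
    have hkey := key (k₀ : ℕ) (by omega)
    rw [hP, hQ'] at hkey
    rw [hmr] at hkey
    have heq : F k₀ = - x - ∑ j, |g j - x| := by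
      simp only [hF, hP, hQ]
      rw [← hS] at hsplit
      have hc0 : ((k₀ : ℕ) : ℝ) = (S.card : ℝ) := rfl
      rw [hc0] at hkey
      linarith
    exact le_trans (ciInf_le (Finite.bddBelow_range F) k₀) (le_of_eq heq)

lemma keySup (n : ℕ) (hn : 0 < n) (g : Fin (n - 1) → ℝ) (hg : Monotone g) (x : ℝ) :
    (- x + ∑ j, |g j - x|) =
    ⨆ k : Fin n, ((2 * ((k : ℕ) + 1) - (n : ℝ) - 2) * x +
      ((∑ j ∈ Finset.univ.filter (fun j : Fin (n - 1) => (k : ℕ) ≤ (j : ℕ)), g j) -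
       (∑ j ∈ Finset.univ.filter (fun j : Fin (n - 1) => (j : ℕ) < (k : ℕ)), g j))) := by
  haveI : Nonempty (Fin n) := Fin.pos_iff_nonempty.mp hn
  have hmr : ((n - 1 : ℕ) : ℝ) = (n : ℝ) - 1 := Nat.cast_pred hn
  set F : Fin n → ℝ := fun k => ((2 * ((k : ℕ) + 1) - (n : ℝ) - 2) * x +
      ((∑ j ∈ Finset.univ.filter (fun j : Fin (n - 1) => (k : ℕ) ≤ (j : ℕ)), g j) -
       (∑ j ∈ Finset.univ.filter (fun j : Fin (n - 1) => (j : ℕ) < (k : ℕ)), g j))) with hF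
  have key : ∀ c : ℕ, c ≤ n - 1 →
      ((∑ j ∈ Finset.univ.filter (fun j : Fin (n - 1) => (j : ℕ) < c), (x - g j)) +
       (∑ j ∈ Finset.univ.filter (fun j : Fin (n - 1) => ¬ (j : ℕ) < c), (g j - x)))
      = ((c : ℝ) - (((n - 1 : ℕ) : ℝ) - c)) * x
        - (∑ j ∈ Finset.univ.filter (fun j : Fin (n - 1) => (j : ℕ) < c), g j)
        + (∑ j ∈ Finset.univ.filter (fun j : Fin (n - 1) => ¬ (j : ℕ) < c), g j) := by
    intro c hc
    have h1 : (Finset.univ.filter fun j : Fin (n - 1) => (j : ℕ) < c).card = c :=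
      card_filter_val_lt (n - 1) c hc
    have h2 : (Finset.univ.filter fun j : Fin (n - 1) => ¬ (j : ℕ) < c).card = n - 1 - c := by
      have := Finset.card_filter_add_card_filter_not
        (s := (Finset.univ : Finset (Fin (n - 1)))) (p := fun j : Fin (n - 1) => (j : ℕ) < c)
      rw [h1, Finset.card_univ, Fintype.card_fin] at this
      omega
    have h3 : ((n - 1 - c : ℕ) : ℝ) = ((n - 1 : ℕ) : ℝ) - c := by
      rw [Nat.cast_sub hc]
    rw [Finset.sum_sub_distrib, Finset.sum_sub_distrib, Finset.sum_const, Finset.sum_const,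
      h1, h2]
    simp only [nsmul_eq_mul]
    rw [h3]
    ring
  apply le_antisymm
  · set S := Finset.univ.filter fun j : Fin (n - 1) => g j < x with hS
    have hcard : S.card ≤ n - 1 := le_trans (Finset.card_le_card (Finset.filter_subset _ _))
      (by rw [Finset.card_univ, Fintype.card_fin])
    set k₀ : Fin n := ⟨S.card, by omega⟩ with hk₀
    have hP : (Finset.univ.filter fun j : Fin (n - 1) => (j : ℕ) < (k₀ : ℕ)) = S := by
      apply Finset.filter_congr
      intro j _
      simpa using (filter_index_iff (n - 1) g hg x j)
    have hQ' : (Finset.univ.filter fun j : Fin (n - 1) => ¬ (j : ℕ) < (k₀ : ℕ))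
        = Finset.univ.filter fun j : Fin (n - 1) => ¬ g j < x := by
      rw [Finset.filter_not, Finset.filter_not, hP, hS]
    have hQ : (Finset.univ.filter fun j : Fin (n - 1) => (k₀ : ℕ) ≤ (j : ℕ))
        = Finset.univ.filter fun j : Fin (n - 1) => ¬ g j < x := by
      rw [← hQ']
      simp only [not_lt]
    have hsplit := Finset.sum_filter_add_sum_filter_not Finset.univ
      (fun j : Fin (n - 1) => g j < x) (fun j => |g j - x|)
    have e1 : ∑ j ∈ S, |g j - x| = ∑ j ∈ S, (x - g j) := by
      apply Finset.sum_congr rfl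
      intro j hj
      rw [hS, Finset.mem_filter] at hj
      rw [abs_of_neg (by linarith [hj.2])]; ring
    have e2 : ∑ j ∈ Finset.univ.filter (fun j : Fin (n - 1) => ¬ g j < x), |g j - x|
        = ∑ j ∈ Finset.univ.filter (fun j : Fin (n - 1) => ¬ g j < x), (g j - x) := by
      apply Finset.sum_congr rfl
      intro j hj
      simp only [Finset.mem_filter, not_lt] at hj
      rw [abs_of_nonneg (by linarith [hj.2])]
    have hkey := key (k₀ : ℕ) (by omega)
    rw [hP, hQ'] at hkey
    rw [hmr] at hkey
    have heq : F k₀ = - x + ∑ j, |g j - x| := by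
      simp only [hF, hP, hQ]
      rw [← hS] at hsplit
      have hc0 : ((k₀ : ℕ) : ℝ) = (S.card : ℝ) := rfl
      rw [hc0] at hkey
      linarith
    exact le_trans (le_of_eq heq.symm) (le_ciSup (Finite.bddAbove_range F) k₀)
  · apply ciSup_le
    intro k
    have hk : (k : ℕ) ≤ n - 1 := Nat.le_pred_of_lt k.isLt
    have hQ : (Finset.univ.filter fun j : Fin (n - 1) => (k : ℕ) ≤ (j : ℕ))
        = Finset.univ.filter fun j : Fin (n - 1) => ¬ (j : ℕ) < (k : ℕ) := by
      simp only [not_lt]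
    have hsplit := Finset.sum_filter_add_sum_filter_not Finset.univ
      (fun j : Fin (n - 1) => (j : ℕ) < (k : ℕ)) (fun j => |g j - x|)
    have hs1 := Finset.sum_le_sum (fun j (_ : j ∈ Finset.univ.filter
        (fun j : Fin (n - 1) => (j : ℕ) < (k : ℕ))) =>
      (by rw [abs_sub_comm]; exact le_abs_self _ : x - g j ≤ |g j - x|))
    have hs2 := Finset.sum_le_sum (fun j (_ : j ∈ Finset.univ.filter
        (fun j : Fin (n - 1) => ¬ (j : ℕ) < (k : ℕ))) =>
      (le_abs_self _ : g j - x ≤ |g j - x|))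
    have hkey := key (k : ℕ) hk
    rw [hmr] at hkey
    simp only [hF, hQ]
    linarith

lemma fin_add_iInf {ι : Type*} [Finite ι] [Nonempty ι] (c : ℝ) (f : ι → ℝ) :
    c + ⨅ i, f i = ⨅ i, (c + f i) := by
  obtain ⟨i₀, hi₀⟩ := Finite.exists_min f
  have h1 : ⨅ i, f i = f i₀ :=
    le_antisymm (ciInf_le (Finite.bddBelow_range f) i₀) (le_ciInf hi₀)
  rw [h1]
  refine le_antisymm (le_ciInf fun i => by linarith [hi₀ i])
    (ciInf_le (Finite.bddBelow_range fun i => c + f i) i₀)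

lemma fin_add_iSup {ι : Type*} [Finite ι] [Nonempty ι] (c : ℝ) (f : ι → ℝ) :
    c + ⨆ i, f i = ⨆ i, (c + f i) := by
  obtain ⟨i₀, hi₀⟩ := Finite.exists_max f
  have h1 : ⨆ i, f i = f i₀ :=
    le_antisymm (ciSup_le hi₀) (le_ciSup (Finite.bddAbove_range f) i₀)
  rw [h1]
  refine le_antisymm (le_ciSup (Finite.bddAbove_range fun i => c + f i) i₀)
    (ciSup_le fun i => by linarith [hi₀ i])

lemma fin_iInf_comm {ι κ : Type*} [Finite ι] [Nonempty ι] [Finite κ] [Nonempty κ]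
    (f : ι → κ → ℝ) : ⨅ i, ⨅ k, f i k = ⨅ k, ⨅ i, f i k := by
  apply le_antisymm
  · refine le_ciInf fun k => le_ciInf fun i => ?_
    have h1 : (⨅ i', ⨅ k', f i' k') ≤ ⨅ k', f i k' :=
      ciInf_le (Finite.bddBelow_range fun i' => ⨅ k', f i' k') i
    have h2 : (⨅ k', f i k') ≤ f i k := ciInf_le (Finite.bddBelow_range (f i)) k
    exact le_trans h1 h2
  · refine le_ciInf fun i => le_ciInf fun k => ?_
    have h1 : (⨅ k', ⨅ i', f i' k') ≤ ⨅ i', f i' k :=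
      ciInf_le (Finite.bddBelow_range fun k' => ⨅ i', f i' k') k
    have h2 : (⨅ i', f i' k) ≤ f i k := ciInf_le (Finite.bddBelow_range fun i' => f i' k) i
    exact le_trans h1 h2

lemma fin_iSup_comm {ι κ : Type*} [Finite ι] [Nonempty ι] [Finite κ] [Nonempty κ]
    (f : ι → κ → ℝ) : ⨆ i, ⨆ k, f i k = ⨆ k, ⨆ i, f i k := by
  apply le_antisymm
  · refine ciSup_le fun i => ciSup_le fun k => ?_
    have h1 : f i k ≤ ⨆ i', f i' k := le_ciSup (Finite.bddAbove_range fun i' => f i' k) i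
    have h2 : (⨆ i', f i' k) ≤ ⨆ k', ⨆ i', f i' k' :=
      le_ciSup (Finite.bddAbove_range fun k' => ⨆ i', f i' k') k
    exact le_trans h1 h2
  · refine ciSup_le fun k => ciSup_le fun i => ?_
    have h1 : f i k ≤ ⨆ k', f i k' := le_ciSup (Finite.bddAbove_range (f i)) k
    have h2 : (⨆ k', f i k') ≤ ⨆ i', ⨆ k', f i' k' :=
      le_ciSup (Finite.bddAbove_range fun i' => ⨆ k', f i' k') i
    exact le_trans h1 h2

/-- Global-bounds part of the shifted Gershgorin theorem: with `y i` the sorted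
off-diagonal entries of each row `i`, `s_{i,k} = a_{ii} + δ_{i,k}`, `S_{i,k} = a_{ii} − δ_{i,k}`,
`s_k = min_i s_{i,k}`, `S_k = max_i S_{i,k}`, `r_k = n − 2k` and `R_k = 2k − n − 2`
(paper index `k+1` for `k : Fin n`), one has for every real `x`:
`min_i d_i(A,x) = min_k (r_k x + s_k)` and `max_i D_i(A,x) = max_k (R_k x + S_k)`. -/

theorem shifted_gershgorin_global_bounds (n : ℕ) (hn : 0 < n)
    (A : Matrix (Fin n) (Fin n) ℝ) (hA : A.IsSymm)
    (y : Fin n → Fin (n - 1) → ℝ) (e : ∀ i : Fin n, Fin (n - 1) ≃ {j : Fin n // j ≠ i})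
    (hy : ∀ i k, y i k = A i (e i k).1) (hmono : ∀ i, Monotone (y i)) (x : ℝ) :
    (⨅ i, gershLower n A x i) =
      (⨅ k : Fin n, (((n : ℝ) - 2 * ((k : ℕ) + 1)) * x +
        ⨅ i : Fin n, (A i i + deltaIK n y i k))) ∧
    (⨆ i, gershUpper n A x i) =
      (⨆ k : Fin n, ((2 * ((k : ℕ) + 1) - (n : ℝ) - 2) * x +
        ⨆ i : Fin n, (A i i - deltaIK n y i k))) := by
  haveI : Nonempty (Fin n) := Fin.pos_iff_nonempty.mp hn
  have hsum : ∀ i : Fin n,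
      ∑ j ∈ Finset.univ.erase i, |A i j - x| = ∑ j, |y i j - x| := by
    intro i
    rw [Finset.sum_subtype (p := fun j => j ≠ i) (Finset.univ.erase i)
      (fun j => by simp [Finset.mem_erase]) (fun j => |A i j - x|)]
    rw [← Equiv.sum_comp (e i) (fun a : {j : Fin n // j ≠ i} => |A i a.1 - x|)]
    exact Finset.sum_congr rfl fun k _ => by rw [← hy]
  have hrowL : ∀ i, gershLower n A x i =
      ⨅ k : Fin n, (((n : ℝ) - 2 * ((k : ℕ) + 1)) * x + (A i i + deltaIK n y i k)) := by
    intro i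
    unfold gershLower
    rw [hsum i, show A i i - x - ∑ j, |y i j - x| = A i i + (- x - ∑ j, |y i j - x|) from
      by ring, keyInf n hn (y i) (hmono i) x, fin_add_iInf]
    exact iInf_congr fun k => by simp only [deltaIK]; ring
  have hrowU : ∀ i, gershUpper n A x i =
      ⨆ k : Fin n, ((2 * ((k : ℕ) + 1) - (n : ℝ) - 2) * x + (A i i - deltaIK n y i k)) := by
    intro i
    unfold gershUpper
    rw [hsum i, show A i i - x + ∑ j, |y i j - x| = A i i + (- x + ∑ j, |y i j - x|) from
      by ring, keySup n hn (y i) (hmono i) x, fin_add_iSup]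
    exact iSup_congr fun k => by simp only [deltaIK]; ring
  constructor
  · rw [iInf_congr hrowL, fin_iInf_comm]
    exact iInf_congr fun k => (fin_add_iInf _ _).symm
  · rw [iSup_congr hrowU, fin_iSup_comm]
    exact iSup_congr fun k => (fin_add_iSup _ _).symm
end

section
/- Let A be an n×n real symmetric matrix with entries a_{ij}, and let I = {i : d_i(A,0) = min_j d_j(A,0)} be the set of rows attaining the unshifted Gershgorin lower bound. Then sup_{x≥0} min_i d_i(A,x) > min_i d_i(A,0) (i.e. shifting strictly improves the Gershgorin lower bound) if and only if for every i ∈ I the number of indices j ≠ i with a_{ij} > 0 is strictly greater than n/2. -/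
open Finset



section Helpers

variable (n : ℕ) (A : Matrix (Fin n) (Fin n) ℝ) (i : Fin n) (x : ℝ)

lemma card_split :
    ((univ.erase i).filter (fun j => 0 < A i j)).card
      + ((univ.erase i).filter (fun j => ¬ 0 < A i j)).card + 1 = n := by
  rw [Finset.card_filter_add_card_filter_not, Finset.card_erase_of_mem (mem_univ i),
    Finset.card_univ, Fintype.card_fin]
  have := i.pos
  omega

lemma gersh_zero : gershLower n A 0 i = A i i - ∑ j ∈ univ.erase i, |A i j| := by
  simp [gershLower]

/-- Lemma A: bad row doesn't improve. -/
lemma rowA (hx : 0 ≤ x)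
    (hp : 2 * ((univ.erase i).filter (fun j => 0 < A i j)).card ≤ n) :
    gershLower n A x i ≤ gershLower n A 0 i := by
  set s := univ.erase i with hs
  set P : Fin n → Prop := fun j => 0 < A i j with hP
  have hsplit1 : ∑ j ∈ s.filter P, |A i j - x| + ∑ j ∈ s.filter (fun j => ¬ P j), |A i j - x|
      = ∑ j ∈ s, |A i j - x| := Finset.sum_filter_add_sum_filter_not s P _
  have hsplit2 : ∑ j ∈ s.filter P, |A i j| + ∑ j ∈ s.filter (fun j => ¬ P j), |A i j|
      = ∑ j ∈ s, |A i j| := Finset.sum_filter_add_sum_filter_not s P _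
  have h1 : ∑ j ∈ s.filter P, (|A i j| - x) ≤ ∑ j ∈ s.filter P, |A i j - x| := by
    refine Finset.sum_le_sum fun j _ => ?_
    have := abs_sub_abs_le_abs_sub (A i j) x
    rwa [abs_of_nonneg hx] at this
  have h2 : ∑ j ∈ s.filter (fun j => ¬ P j), |A i j - x|
      = ∑ j ∈ s.filter (fun j => ¬ P j), (|A i j| + x) := by
    refine Finset.sum_congr rfl fun j hj => ?_
    have hj' : A i j ≤ 0 := le_of_not_gt (Finset.mem_filter.mp hj).2
    rw [abs_of_nonpos hj', abs_of_nonpos (by linarith)]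
    ring
  rw [Finset.sum_sub_distrib, Finset.sum_const, nsmul_eq_mul] at h1
  rw [Finset.sum_add_distrib, Finset.sum_const, nsmul_eq_mul] at h2
  have hcard := card_split n A i
  set cP := (s.filter P).card
  set cN := (s.filter (fun j => ¬ P j)).card
  have hcR : (cP : ℝ) + cN + 1 = n := by exact_mod_cast congrArg (Nat.cast : ℕ → ℝ) hcard
  have hpR : 2 * (cP : ℝ) ≤ n := by exact_mod_cast hp
  simp only [gershLower, sub_zero]; rw [← hsplit1, ← hsplit2]
  nlinarith [mul_nonneg (Nat.cast_nonneg cN : (0:ℝ) ≤ cN) hx,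
    mul_nonneg (Nat.cast_nonneg cP : (0:ℝ) ≤ cP) hx]

/-- Lemma B: good row improves by at least x. -/
lemma rowB (hx : 0 ≤ x)
    (hsmall : ∀ j, 0 < A i j → x ≤ A i j)
    (hp : n + 1 ≤ 2 * ((univ.erase i).filter (fun j => 0 < A i j)).card) :
    gershLower n A 0 i + x ≤ gershLower n A x i := by
  set s := univ.erase i with hs
  set P : Fin n → Prop := fun j => 0 < A i j with hP
  have hsplit1 : ∑ j ∈ s.filter P, |A i j - x| + ∑ j ∈ s.filter (fun j => ¬ P j), |A i j - x|
      = ∑ j ∈ s, |A i j - x| := Finset.sum_filter_add_sum_filter_not s P _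
  have hsplit2 : ∑ j ∈ s.filter P, |A i j| + ∑ j ∈ s.filter (fun j => ¬ P j), |A i j|
      = ∑ j ∈ s, |A i j| := Finset.sum_filter_add_sum_filter_not s P _
  have h1 : ∑ j ∈ s.filter P, |A i j - x| = ∑ j ∈ s.filter P, (|A i j| - x) := by
    refine Finset.sum_congr rfl fun j hj => ?_
    have hj' : 0 < A i j := (Finset.mem_filter.mp hj).2
    rw [abs_of_pos hj', abs_of_nonneg (by linarith [hsmall j hj'])]
  have h2 : ∑ j ∈ s.filter (fun j => ¬ P j), |A i j - x|
      = ∑ j ∈ s.filter (fun j => ¬ P j), (|A i j| + x) := by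
    refine Finset.sum_congr rfl fun j hj => ?_
    have hj' : A i j ≤ 0 := le_of_not_gt (Finset.mem_filter.mp hj).2
    rw [abs_of_nonpos hj', abs_of_nonpos (by linarith)]
    ring
  rw [Finset.sum_sub_distrib, Finset.sum_const, nsmul_eq_mul] at h1
  rw [Finset.sum_add_distrib, Finset.sum_const, nsmul_eq_mul] at h2
  have hcard := card_split n A i
  set cP := (s.filter P).card
  set cN := (s.filter (fun j => ¬ P j)).card
  have hcR : (cP : ℝ) + cN + 1 = n := by exact_mod_cast congrArg (Nat.cast : ℕ → ℝ) hcard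
  have hpR : (n : ℝ) + 1 ≤ 2 * cP := by exact_mod_cast hp
  simp only [gershLower, sub_zero]; rw [← hsplit1, ← hsplit2]
  nlinarith

/-- Lemma C: Lipschitz-type lower bound. -/
lemma rowC (hx : 0 ≤ x) :
    gershLower n A 0 i - n * x ≤ gershLower n A x i := by
  set s := univ.erase i with hs
  have h1 : ∑ j ∈ s, |A i j - x| ≤ ∑ j ∈ s, (|A i j| + x) := by
    refine Finset.sum_le_sum fun j _ => ?_
    calc |A i j - x| ≤ |A i j| + |x| := abs_sub _ _
    _ = |A i j| + x := by rw [abs_of_nonneg hx]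
  rw [Finset.sum_add_distrib, Finset.sum_const, nsmul_eq_mul] at h1
  have hcard : (s.card : ℝ) + 1 = n := by
    have : s.card + 1 = n := by
      rw [hs, Finset.card_erase_of_mem (mem_univ i), Finset.card_univ, Fintype.card_fin]
      have := i.pos; omega
    exact_mod_cast this
  simp only [gershLower, sub_zero]
  nlinarith

/-- gershLower is bounded above by the diagonal entry for x ≥ 0. -/
lemma gersh_le_diag (hx : 0 ≤ x) : gershLower n A x i ≤ A i i := by
  have h : 0 ≤ ∑ j ∈ univ.erase i, |A i j - x| :=
    Finset.sum_nonneg fun j _ => abs_nonneg _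
  rw [gershLower]; linarith

end Helpers

lemma inf_attained {ι : Type*} [Nonempty ι] [Finite ι] (f : ι → ℝ) :
    ∃ i, (⨅ j, f j) = f i ∧ ∀ j, f i ≤ f j := by
  obtain ⟨i, hi⟩ := Finite.exists_min f
  exact ⟨i, le_antisymm (ciInf_le (Set.Finite.bddBelow (Set.finite_range f)) i)
    (le_ciInf hi), hi⟩


/-- Local improvement criterion for the shifted Gershgorin lower bound:
shifting strictly improves the Gershgorin lower bound, i.e.
`sup_{x≥0} min_i d_i(A,x) > min_i d_i(A,0)`, if and only if every row `i` attaining the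
unshifted bound has strictly more than `n/2` positive off-diagonal entries. -/
theorem shifted_gershgorin_local_improvement_lower (n : ℕ) (hn : 0 < n)
    (A : Matrix (Fin n) (Fin n) ℝ) (hA : A.IsSymm) :
    ((⨅ i, gershLower n A 0 i) <
        ⨆ x : {x : ℝ // 0 ≤ x}, ⨅ i, gershLower n A x.1 i) ↔
      (∀ i : Fin n, gershLower n A 0 i = (⨅ j, gershLower n A 0 j) →
        (n : ℝ) / 2 < (Nat.card {j : Fin n // j ≠ i ∧ 0 < A i j} : ℝ)) := by
  haveI : Nonempty (Fin n) := ⟨⟨0, hn⟩⟩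
  obtain ⟨i₀⟩ := (inferInstance : Nonempty (Fin n))
  set μ := ⨅ i, gershLower n A 0 i with hμ
  have hbddF : ∀ x : ℝ, BddBelow (Set.range (gershLower n A x)) := fun x =>
    Set.Finite.bddBelow (Set.finite_range _)
  have hbdd : BddAbove (Set.range fun x : {x : ℝ // 0 ≤ x} => ⨅ i, gershLower n A x.1 i) := by
    refine ⟨A i₀ i₀, ?_⟩
    rintro _ ⟨x, rfl⟩
    exact le_trans (ciInf_le (hbddF x.1) i₀) (gersh_le_diag n A i₀ x.1 x.2)
  have hcardconv : ∀ i : Fin n, (Nat.card {j : Fin n // j ≠ i ∧ 0 < A i j})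
      = ((Finset.univ.erase i).filter (fun j => 0 < A i j)).card := by
    intro i
    rw [Nat.card_eq_fintype_card, Fintype.card_subtype]
    congr 1
    ext j
    simp [Finset.mem_filter, Finset.mem_erase, and_comm]
  have hcond : ∀ i : Fin n, ((n : ℝ) / 2 < (Nat.card {j : Fin n // j ≠ i ∧ 0 < A i j} : ℝ)) ↔
      n + 1 ≤ 2 * ((Finset.univ.erase i).filter (fun j => 0 < A i j)).card := by
    intro i
    rw [hcardconv i, div_lt_iff₀ (by norm_num : (0:ℝ) < 2)]
    set c := ((Finset.univ.erase i).filter (fun j => 0 < A i j)).card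
    constructor
    · intro h
      have h' : n < 2 * c := by
        have : (n : ℝ) < ((2 * c : ℕ) : ℝ) := by push_cast; linarith
        exact_mod_cast this
      omega
    · intro h
      have h' : (n : ℝ) + 1 ≤ ((2 * c : ℕ) : ℝ) := by exact_mod_cast h
      push_cast at h'
      linarith
  constructor
  · intro hlt i hi
    rw [hcond i]
    by_contra hle
    obtain ⟨x, hx⟩ := (lt_ciSup_iff hbdd).mp hlt
    have h1 : (⨅ j, gershLower n A x.1 j) ≤ gershLower n A x.1 i := ciInf_le (hbddF x.1) i
    have h2 : gershLower n A x.1 i ≤ gershLower n A 0 i :=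
      rowA n A i x.1 x.2 (by omega)
    rw [hi] at h2
    exact absurd (lt_of_lt_of_le hx (le_trans h1 h2)) (lt_irrefl μ)
  · intro hyp
    classical
    set S : Finset ℝ :=
      insert 1 ((((Finset.univ ×ˢ Finset.univ).filter
          fun p : Fin n × Fin n => 0 < A p.1 p.2).image fun p => A p.1 p.2) ∪
        ((Finset.univ.filter fun i => μ < gershLower n A 0 i).image
          fun i => (gershLower n A 0 i - μ) / (n + 1))) with hS
    have hSne : S.Nonempty := ⟨1, Finset.mem_insert_self _ _⟩
    set x := S.min' hSne with hx
    have hn1 : (0:ℝ) < (n:ℝ) + 1 := by positivity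
    have hxpos : 0 < x := by
      rw [hx, Finset.lt_min'_iff]
      intro y hy
      simp only [hS, Finset.mem_insert, Finset.mem_union, Finset.mem_image,
        Finset.mem_filter, Finset.mem_product, Finset.mem_univ, true_and] at hy
      rcases hy with rfl | ⟨⟨p, hp, rfl⟩ | ⟨i, hi, rfl⟩⟩
      · norm_num
      · exact hp
      · exact div_pos (by linarith) hn1
    have hxsmall : ∀ i j : Fin n, 0 < A i j → x ≤ A i j := by
      intro i j h
      refine Finset.min'_le _ _ ?_
      simp only [hS, Finset.mem_insert, Finset.mem_union, Finset.mem_image,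
        Finset.mem_filter, Finset.mem_product, Finset.mem_univ, true_and]
      exact Or.inr (Or.inl ⟨(i, j), h, rfl⟩)
    have hxdel : ∀ i : Fin n, μ < gershLower n A 0 i →
        x ≤ (gershLower n A 0 i - μ) / (n + 1) := by
      intro i h
      refine Finset.min'_le _ _ ?_
      simp only [hS, Finset.mem_insert, Finset.mem_union, Finset.mem_image,
        Finset.mem_filter, Finset.mem_product, Finset.mem_univ, true_and]
      exact Or.inr (Or.inr ⟨i, h, rfl⟩)
    have key : ∀ i : Fin n, μ + x ≤ gershLower n A x i := by
      intro i
      rcases eq_or_lt_of_le (ciInf_le (hbddF 0) i : μ ≤ gershLower n A 0 i) with heq | hlt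
      · have hp := (hcond i).mp (hyp i heq.symm)
        have hB := rowB n A i x hxpos.le (fun j hj => hxsmall i j hj) hp
        rw [← heq] at hB
        exact hB
      · have hC := rowC n A i x hxpos.le
        have hd := hxdel i hlt
        rw [le_div_iff₀ hn1] at hd
        have hring : x * ((n:ℝ) + 1) = (n:ℝ) * x + x := by ring
        linarith
    have h1 : μ + x ≤ ⨅ i, gershLower n A x i := le_ciInf key
    have h2 : (⨅ i, gershLower n A x i) ≤
        ⨆ y : {y : ℝ // 0 ≤ y}, ⨅ i, gershLower n A y.1 i :=
      le_ciSup hbdd ⟨x, hxpos.le⟩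
    linarith
end

section
/- Let A be an n×n real symmetric matrix with entries a_{ij}, and let J = {i : D_i(A,0) = max_j D_j(A,0)} be the set of rows attaining the unshifted Gershgorin upper bound. Then inf_{x≤0} max_i D_i(A,x) < max_i D_i(A,0) (i.e. shifting strictly improves the Gershgorin upper bound) if and only if for every i ∈ J the number of indices j ≠ i with a_{ij} < 0 is strictly greater than n/2. -/
open Finset

private lemma gersh_lb (n : ℕ) (A : Matrix (Fin n) (Fin n) ℝ) (i : Fin n) (x : ℝ) (hx : x ≤ 0) :
    gershUpper n A 0 i + (-x) * (1 + (((univ.erase i).filter fun j => ¬ A i j < 0).card : ℝ)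
      - (((univ.erase i).filter fun j => A i j < 0).card : ℝ)) ≤ gershUpper n A x i := by
  have hxabs : |x| = -x := abs_of_nonpos hx
  have e0 : gershUpper n A 0 i = A i i +
      (∑ j ∈ (univ.erase i).filter (fun j => A i j < 0), |A i j|
       + ∑ j ∈ (univ.erase i).filter (fun j => ¬ A i j < 0), |A i j|) := by
    unfold gershUpper
    rw [Finset.sum_filter_add_sum_filter_not]
    simp
  have ex : gershUpper n A x i = A i i - x +
      (∑ j ∈ (univ.erase i).filter (fun j => A i j < 0), |A i j - x|
       + ∑ j ∈ (univ.erase i).filter (fun j => ¬ A i j < 0), |A i j - x|) := by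
    unfold gershUpper
    rw [Finset.sum_filter_add_sum_filter_not]
  have h1 : ∑ j ∈ (univ.erase i).filter (fun j => A i j < 0), |A i j|
      + (((univ.erase i).filter (fun j => A i j < 0)).card : ℝ) * x
      ≤ ∑ j ∈ (univ.erase i).filter (fun j => A i j < 0), |A i j - x| := by
    have step : ∀ j ∈ (univ.erase i).filter (fun j => A i j < 0),
        |A i j| + x ≤ |A i j - x| := by
      intro j _
      have h := abs_sub_abs_le_abs_sub (A i j) x
      rw [hxabs] at h; linarith
    calc ∑ j ∈ (univ.erase i).filter (fun j => A i j < 0), |A i j|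
        + (((univ.erase i).filter (fun j => A i j < 0)).card : ℝ) * x
        = ∑ j ∈ (univ.erase i).filter (fun j => A i j < 0), (|A i j| + x) := by
          rw [Finset.sum_add_distrib, Finset.sum_const, nsmul_eq_mul]
      _ ≤ _ := Finset.sum_le_sum step
  have e2 : ∀ j ∈ (univ.erase i).filter (fun j => ¬ A i j < 0),
      |A i j - x| = |A i j| + (-x) := by
    intro j hj
    simp only [mem_filter, not_lt] at hj
    rw [abs_of_nonneg (by linarith [hj.2] : (0:ℝ) ≤ A i j - x), abs_of_nonneg hj.2]
    ring
  have h2 : ∑ j ∈ (univ.erase i).filter (fun j => ¬ A i j < 0), |A i j - x|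
      = ∑ j ∈ (univ.erase i).filter (fun j => ¬ A i j < 0), |A i j|
        + (((univ.erase i).filter (fun j => ¬ A i j < 0)).card : ℝ) * (-x) := by
    rw [Finset.sum_congr rfl e2, Finset.sum_add_distrib, Finset.sum_const, nsmul_eq_mul]
  rw [e0, ex]
  linarith

private lemma gersh_eq (n : ℕ) (A : Matrix (Fin n) (Fin n) ℝ) (i : Fin n) (t : ℝ)
    (ht : 0 ≤ t) (hsmall : ∀ j, A i j < 0 → t ≤ -A i j) :
    gershUpper n A (-t) i = gershUpper n A 0 i
      + t * (1 + (((univ.erase i).filter fun j => ¬ A i j < 0).card : ℝ)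
      - (((univ.erase i).filter fun j => A i j < 0).card : ℝ)) := by
  have e0 : gershUpper n A 0 i = A i i +
      (∑ j ∈ (univ.erase i).filter (fun j => A i j < 0), |A i j|
       + ∑ j ∈ (univ.erase i).filter (fun j => ¬ A i j < 0), |A i j|) := by
    unfold gershUpper
    rw [Finset.sum_filter_add_sum_filter_not]
    simp
  have ex : gershUpper n A (-t) i = A i i + t +
      (∑ j ∈ (univ.erase i).filter (fun j => A i j < 0), |A i j - (-t)|
       + ∑ j ∈ (univ.erase i).filter (fun j => ¬ A i j < 0), |A i j - (-t)|) := by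
    unfold gershUpper
    rw [Finset.sum_filter_add_sum_filter_not]
    ring
  have e1 : ∀ j ∈ (univ.erase i).filter (fun j => A i j < 0),
      |A i j - (-t)| = |A i j| + (-t) := by
    intro j hj
    simp only [mem_filter] at hj
    have h1 := hsmall j hj.2
    rw [abs_of_nonpos (by linarith : A i j - (-t) ≤ 0), abs_of_neg hj.2]
    ring
  have h1 : ∑ j ∈ (univ.erase i).filter (fun j => A i j < 0), |A i j - (-t)|
      = ∑ j ∈ (univ.erase i).filter (fun j => A i j < 0), |A i j|
        + (((univ.erase i).filter (fun j => A i j < 0)).card : ℝ) * (-t) := by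
    rw [Finset.sum_congr rfl e1, Finset.sum_add_distrib, Finset.sum_const, nsmul_eq_mul]
  have e2 : ∀ j ∈ (univ.erase i).filter (fun j => ¬ A i j < 0),
      |A i j - (-t)| = |A i j| + t := by
    intro j hj
    simp only [mem_filter, not_lt] at hj
    rw [abs_of_nonneg (by linarith [hj.2] : (0:ℝ) ≤ A i j - (-t)), abs_of_nonneg hj.2]
    ring
  have h2 : ∑ j ∈ (univ.erase i).filter (fun j => ¬ A i j < 0), |A i j - (-t)|
      = ∑ j ∈ (univ.erase i).filter (fun j => ¬ A i j < 0), |A i j|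
        + (((univ.erase i).filter (fun j => ¬ A i j < 0)).card : ℝ) * t := by
    rw [Finset.sum_congr rfl e2, Finset.sum_add_distrib, Finset.sum_const, nsmul_eq_mul]
  rw [e0, ex, h1, h2]
  ring

private lemma gersh_ub (n : ℕ) (A : Matrix (Fin n) (Fin n) ℝ) (i : Fin n) (t : ℝ)
    (ht : 0 ≤ t) :
    gershUpper n A (-t) i ≤ gershUpper n A 0 i + t * (1 + ((univ.erase i).card : ℝ)) := by
  have h : ∑ j ∈ univ.erase i, |A i j - (-t)| ≤
      ∑ j ∈ univ.erase i, |A i j| + ((univ.erase i).card : ℝ) * t := by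
    calc ∑ j ∈ univ.erase i, |A i j - (-t)|
        ≤ ∑ j ∈ univ.erase i, (|A i j| + t) := by
          refine Finset.sum_le_sum fun j _ => ?_
          calc |A i j - (-t)| = |A i j + t| := by ring_nf
            _ ≤ |A i j| + |t| := abs_add_le _ _
            _ = |A i j| + t := by rw [abs_of_nonneg ht]
      _ = _ := by rw [Finset.sum_add_distrib, Finset.sum_const, nsmul_eq_mul]
  unfold gershUpper
  simp only [sub_zero]
  linarith

/-- Local improvement criterion for the shifted Gershgorin upper bound:
shifting strictly improves the Gershgorin upper bound, i.e.
`inf_{x≤0} max_i D_i(A,x) < max_i D_i(A,0)`, if and only if every row `i` attaining the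
unshifted bound has strictly more than `n/2` negative off-diagonal entries. -/
theorem shifted_gershgorin_local_improvement_upper (n : ℕ) (hn : 0 < n)
    (A : Matrix (Fin n) (Fin n) ℝ) (hA : A.IsSymm) :
    ((⨅ x : {x : ℝ // x ≤ 0}, ⨆ i, gershUpper n A x.1 i) <
        ⨆ i, gershUpper n A 0 i) ↔
      (∀ i : Fin n, gershUpper n A 0 i = (⨆ j, gershUpper n A 0 j) →
        (n : ℝ) / 2 < (Nat.card {j : Fin n // j ≠ i ∧ A i j < 0} : ℝ)) := by
  have hne : Nonempty (Fin n) := ⟨⟨0, hn⟩⟩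
  haveI hnes : Nonempty {x : ℝ // x ≤ 0} := ⟨⟨0, le_refl 0⟩⟩
  set M := ⨆ j, gershUpper n A 0 j with hMdef
  have hbdd : ∀ x : ℝ, BddAbove (Set.range (gershUpper n A x)) :=
    fun x => Set.Finite.bddAbove (Set.finite_range _)
  have hle : ∀ i, gershUpper n A 0 i ≤ M := fun i => le_ciSup (hbdd 0) i
  have hQ : ∀ i : Fin n, (Nat.card {j : Fin n // j ≠ i ∧ A i j < 0})
      = ((univ.erase i).filter fun j => A i j < 0).card := by
    intro i
    rw [Nat.card_eq_fintype_card, Fintype.card_subtype]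
    congr 1
    ext j
    simp [Finset.mem_erase, and_comm]
  have hPQ : ∀ i : Fin n,
      (((univ.erase i).filter fun j => A i j < 0).card : ℝ)
      + (((univ.erase i).filter fun j => ¬ A i j < 0).card : ℝ) + 1 = n := by
    intro i
    have hnat : ((univ.erase i).filter fun j => A i j < 0).card
        + ((univ.erase i).filter fun j => ¬ A i j < 0).card + 1 = n := by
      rw [Finset.card_filter_add_card_filter_not,
        Finset.card_erase_of_mem (mem_univ i), Finset.card_univ, Fintype.card_fin]
      omega
    exact_mod_cast hnat
  constructor
  · -- improvement → criterion (contrapositive)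
    intro himp i hiM
    by_contra hq
    push_neg at hq
    rw [hQ i] at hq
    have hpq := hPQ i
    have hq' : 2 * (((univ.erase i).filter fun j => A i j < 0).card : ℝ) ≤ n := by
      linarith
    have hMle : M ≤ ⨅ x : {x : ℝ // x ≤ 0}, ⨆ i, gershUpper n A x.1 i := by
      apply le_ciInf
      intro x
      have h1 := gersh_lb n A i x.1 x.2
      have hnn : (0:ℝ) ≤ (-x.1) * (1 + (((univ.erase i).filter fun j => ¬ A i j < 0).card : ℝ)
          - (((univ.erase i).filter fun j => A i j < 0).card : ℝ)) := by
        apply mul_nonneg (by linarith [x.2])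
        linarith
      calc M = gershUpper n A 0 i := hiM.symm
        _ ≤ gershUpper n A x.1 i := by linarith
        _ ≤ ⨆ j, gershUpper n A x.1 j := le_ciSup (hbdd _) i
    exact absurd himp (not_lt.mpr hMle)
  · intro H
    have hprod : (univ ×ˢ univ : Finset (Fin n × Fin n)).Nonempty :=
      ⟨(⟨0, hn⟩, ⟨0, hn⟩), by simp⟩
    set f1 : Fin n × Fin n → ℝ := fun p => if A p.1 p.2 < 0 then -A p.1 p.2 else 1 with hf1
    set t1 := (univ ×ˢ univ).inf' hprod f1 with ht1def
    have ht1pos : 0 < t1 := by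
      rw [ht1def, Finset.lt_inf'_iff]
      intro b _
      simp only [hf1]
      split_ifs with h
      · linarith
      · norm_num
    have ht1le : ∀ i j : Fin n, A i j < 0 → t1 ≤ -A i j := by
      intro i j hij
      have h : t1 ≤ f1 (i, j) :=
        Finset.inf'_le f1 (by simp : (i, j) ∈ (univ ×ˢ univ : Finset (Fin n × Fin n)))
      simpa [hf1, if_pos hij] using h
    set f2 : Fin n → ℝ := fun i =>
      if gershUpper n A 0 i = M then 1 else (M - gershUpper n A 0 i) / (n + 1) with hf2
    set t2 := univ.inf' (Finset.univ_nonempty_iff.mpr hne) f2 with ht2def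
    have hn1 : (0:ℝ) < (n:ℝ) + 1 := by positivity
    have ht2pos : 0 < t2 := by
      rw [ht2def, Finset.lt_inf'_iff]
      intro i _
      simp only [hf2]
      split_ifs with h
      · norm_num
      · have hlt : gershUpper n A 0 i < M := lt_of_le_of_ne (hle i) h
        exact div_pos (by linarith) hn1
    set t := min t1 t2 with htdef
    have htpos : 0 < t := lt_min ht1pos ht2pos
    have hrow : ∀ i, gershUpper n A (-t) i < M := by
      intro i
      by_cases hiM : gershUpper n A 0 i = M
      · have hcrit := H i hiM
        rw [hQ i] at hcrit
        have hpq := hPQ i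
        have heq := gersh_eq n A i t htpos.le
          (fun j hj => le_trans (min_le_left t1 t2) (ht1le i j hj))
        rw [heq, hiM]
        have h2q : (n:ℝ) < 2 * (((univ.erase i).filter fun j => A i j < 0).card : ℝ) := by
          linarith
        have hnat : n < 2 * ((univ.erase i).filter fun j => A i j < 0).card := by
          exact_mod_cast h2q
        have hnat1 : n + 1 ≤ 2 * ((univ.erase i).filter fun j => A i j < 0).card := by omega
        have hR : (n:ℝ) + 1 ≤ 2 * (((univ.erase i).filter fun j => A i j < 0).card : ℝ) := by
          exact_mod_cast hnat1
        have hneg : 1 + (((univ.erase i).filter fun j => ¬ A i j < 0).card : ℝ)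
            - (((univ.erase i).filter fun j => A i j < 0).card : ℝ) ≤ -1 := by
          linarith
        nlinarith [htpos]
      · have hub := gersh_ub n A i t htpos.le
        have hlt : gershUpper n A 0 i < M := lt_of_le_of_ne (hle i) hiM
        have ht2' : t ≤ (M - gershUpper n A 0 i) / (n + 1) := by
          have h : t2 ≤ f2 i := Finset.inf'_le f2 (mem_univ i)
          rw [hf2] at h
          simp only [if_neg hiM] at h
          exact le_trans (min_le_right t1 t2) h
        have hc : ((univ.erase i).card : ℝ) = (n:ℝ) - 1 := by
          rw [Finset.card_erase_of_mem (mem_univ i), Finset.card_univ, Fintype.card_fin]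
          have h1 : (1:ℕ) ≤ n := hn
          push_cast [Nat.cast_sub h1]
          ring
        have htn : t * ((n:ℝ) + 1) ≤ M - gershUpper n A 0 i :=
          (le_div_iff₀ hn1).mp ht2'
        rw [hc] at hub
        nlinarith [htpos]
    obtain ⟨i2, hi2⟩ := Finite.exists_max (gershUpper n A (-t))
    have hbb : BddBelow (Set.range fun x : {x : ℝ // x ≤ 0} => ⨆ i, gershUpper n A x.1 i) := by
      refine ⟨A ⟨0, hn⟩ ⟨0, hn⟩, ?_⟩
      rintro y ⟨x, rfl⟩
      have h1 : A ⟨0, hn⟩ ⟨0, hn⟩ ≤ gershUpper n A x.1 ⟨0, hn⟩ := by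
        unfold gershUpper
        have hs : 0 ≤ ∑ j ∈ univ.erase ⟨0, hn⟩, |A ⟨0, hn⟩ j - x.1| :=
          Finset.sum_nonneg fun j _ => abs_nonneg _
        linarith [x.2]
      exact h1.trans (le_ciSup (hbdd _) _)
    calc (⨅ x : {x : ℝ // x ≤ 0}, ⨆ i, gershUpper n A x.1 i)
        ≤ ⨆ i, gershUpper n A (-t) i := ciInf_le hbb ⟨-t, by linarith⟩
      _ ≤ gershUpper n A (-t) i2 := ciSup_le hi2
      _ < M := hrow i2
end

section
/- Let A be an n×n real symmetric matrix and suppose that s_l < s_k for every pair of integers (k,l) with 1 ≤ k ≤ n/2 < l ≤ n. Then shifting gives no improvement: sup_{x≥0} min_i d_i(A,x) = min_i d_i(A,0). -/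
/-- `s_k = min_i (a_{ii} + δ_{i,k})` (here `k : Fin n` has paper index `k+1`). -/
noncomputable def sK (n : ℕ) (A : Matrix (Fin n) (Fin n) ℝ)
    (y : Fin n → Fin (n - 1) → ℝ) (k : Fin n) : ℝ :=
  ⨅ i : Fin n, (A i i + deltaIK n y i k)

lemma card_filter_lt_fin (m K : ℕ) (hK : K ≤ m) :
    (Finset.univ.filter (fun j : Fin m => (j : ℕ) < K)).card = K := by
  have h : (Finset.univ.filter (fun j : Fin m => (j : ℕ) < K)).card
      = (Finset.range K).card := by
    apply Finset.card_bij (fun (j : Fin m) _ => (j : ℕ))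
    · intro a ha
      simp only [Finset.mem_filter] at ha
      exact Finset.mem_range.mpr ha.2
    · intro a _ b _ h; exact Fin.val_injective h
    · intro b hb
      have hb' := Finset.mem_range.mp hb
      exact ⟨⟨b, lt_of_lt_of_le hb' hK⟩, by simp [hb'], rfl⟩
  rwa [Finset.card_range] at h

lemma gersh_sum_transfer (n : ℕ) (A : Matrix (Fin n) (Fin n) ℝ)
    (y : Fin n → Fin (n - 1) → ℝ) (e : ∀ i : Fin n, Fin (n - 1) ≃ {j : Fin n // j ≠ i})
    (hy : ∀ i k, y i k = A i (e i k).1) (i : Fin n) (x : ℝ) :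
    ∑ j ∈ Finset.univ.erase i, |A i j - x| = ∑ k : Fin (n - 1), |y i k - x| := by
  calc ∑ j ∈ Finset.univ.erase i, |A i j - x|
      = ∑ j : {j : Fin n // j ≠ i}, |A i j.1 - x| :=
        Finset.sum_subtype _ (by simp) _
    _ = ∑ k : Fin (n - 1), |A i (e i k).1 - x| :=
        (Equiv.sum_comp (e i) fun j : {j : Fin n // j ≠ i} => |A i j.1 - x|).symm
    _ = ∑ k : Fin (n - 1), |y i k - x| := by
        simp only [hy]

/-- Per-row upper bound: `d_i(x) ≤ a_{ii} + δ_{i,K} + (n - 2 - 2K) x`. -/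
lemma gersh_upper (n : ℕ) (hn : 0 < n) (A : Matrix (Fin n) (Fin n) ℝ)
    (y : Fin n → Fin (n - 1) → ℝ) (e : ∀ i : Fin n, Fin (n - 1) ≃ {j : Fin n // j ≠ i})
    (hy : ∀ i k, y i k = A i (e i k).1) (i : Fin n) (K : Fin n) (x : ℝ) :
    gershLower n A x i ≤ A i i + deltaIK n y i K + ((n : ℝ) - 2 - 2 * (K : ℕ)) * x := by
  have hKle : (K : ℕ) ≤ n - 1 := Nat.le_pred_of_lt K.isLt
  set s₁ := Finset.univ.filter (fun j : Fin (n - 1) => (j : ℕ) < (K : ℕ)) with hs₁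
  set s₂ := Finset.univ.filter (fun j : Fin (n - 1) => (K : ℕ) ≤ (j : ℕ)) with hs₂
  have hs₂' : s₂ = Finset.univ.filter (fun j : Fin (n - 1) => ¬ (j : ℕ) < (K : ℕ)) := by
    rw [hs₂]; congr 1; ext j; simp [not_lt]
  have hcard₁ : s₁.card = (K : ℕ) := card_filter_lt_fin (n - 1) (K : ℕ) hKle
  have hcardsum : s₁.card + s₂.card = n - 1 := by
    rw [hs₂', hs₁, Finset.card_filter_add_card_filter_not]
    simp
  have hcard₂ : s₂.card = n - 1 - (K : ℕ) := by omega
  have hsplit : ∑ k : Fin (n - 1), |y i k - x|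
      = ∑ k ∈ s₁, |y i k - x| + ∑ k ∈ s₂, |y i k - x| := by
    rw [hs₂', hs₁]
    exact (Finset.sum_filter_add_sum_filter_not _ _ _).symm
  have h1 : ∑ k ∈ s₁, (x - y i k) ≤ ∑ k ∈ s₁, |y i k - x| := by
    apply Finset.sum_le_sum
    intro k _
    rw [abs_sub_comm]
    exact le_abs_self _
  have h2 : ∑ k ∈ s₂, (y i k - x) ≤ ∑ k ∈ s₂, |y i k - x| := by
    apply Finset.sum_le_sum
    intro k _
    exact le_abs_self _
  have e1 : ∑ k ∈ s₁, (x - y i k) = (K : ℕ) * x - ∑ k ∈ s₁, y i k := by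
    rw [Finset.sum_sub_distrib, Finset.sum_const, hcard₁, nsmul_eq_mul]
  have hcast : ((n - 1 - (K : ℕ) : ℕ) : ℝ) = (n : ℝ) - 1 - (K : ℕ) := by
    rw [Nat.cast_sub hKle, Nat.cast_sub (by omega : 1 ≤ n)]
    push_cast
    ring
  have e2 : ∑ k ∈ s₂, (y i k - x) = ∑ k ∈ s₂, y i k - ((n : ℝ) - 1 - (K : ℕ)) * x := by
    rw [Finset.sum_sub_distrib, Finset.sum_const, hcard₂, nsmul_eq_mul, hcast]
  have habs : ((K : ℕ) * x - ∑ k ∈ s₁, y i k)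
      + (∑ k ∈ s₂, y i k - ((n : ℝ) - 1 - (K : ℕ)) * x)
      ≤ ∑ k : Fin (n - 1), |y i k - x| := by
    rw [hsplit, ← e1, ← e2]
    exact add_le_add h1 h2
  have hd : gershLower n A x i = A i i - x - ∑ k : Fin (n - 1), |y i k - x| := by
    rw [gershLower, gersh_sum_transfer n A y e hy]
  rw [hd, deltaIK, ← hs₁, ← hs₂]
  nlinarith [habs]

/-- At `x = 0` each row value equals `a_{ii} + δ_{i,K}` for a suitable `K`. -/
lemma gersh_zero_eq (n : ℕ) (hn : 0 < n) (A : Matrix (Fin n) (Fin n) ℝ)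
    (y : Fin n → Fin (n - 1) → ℝ) (e : ∀ i : Fin n, Fin (n - 1) ≃ {j : Fin n // j ≠ i})
    (hy : ∀ i k, y i k = A i (e i k).1) (hmono : ∀ i, Monotone (y i)) (i : Fin n) :
    ∃ K : Fin n, gershLower n A 0 i = A i i + deltaIK n y i K := by
  classical
  set Knat := (Finset.univ.filter (fun k : Fin (n - 1) => y i k < 0)).card with hKdef
  have hKle : Knat ≤ n - 1 := by
    calc Knat ≤ (Finset.univ : Finset (Fin (n - 1))).card := Finset.card_filter_le _ _
      _ = n - 1 := by simp
  have hKlt : Knat < n := lt_of_le_of_lt hKle (Nat.pred_lt (Nat.pos_iff_ne_zero.mp hn))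
  refine ⟨⟨Knat, hKlt⟩, ?_⟩
  have hiff : ∀ k : Fin (n - 1), y i k < 0 ↔ (k : ℕ) < Knat := by
    intro k
    constructor
    · intro hk
      have hsub : Finset.Iic k ⊆ Finset.univ.filter (fun j : Fin (n - 1) => y i j < 0) := by
        intro j hj
        simp only [Finset.mem_Iic] at hj
        simp only [Finset.mem_filter, Finset.mem_univ, true_and]
        exact lt_of_le_of_lt (hmono i hj) hk
      have := Finset.card_le_card hsub
      rw [Fin.card_Iic] at this
      omega
    · intro hk
      by_contra hge
      push_neg at hge
      have hsub : Finset.univ.filter (fun j : Fin (n - 1) => y i j < 0) ⊆ Finset.Iio k := by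
        intro j hj
        simp only [Finset.mem_filter, Finset.mem_univ, true_and] at hj
        simp only [Finset.mem_Iio]
        by_contra hjk
        push_neg at hjk
        exact absurd (lt_of_le_of_lt (hmono i hjk) hj) (not_lt.mpr hge)
      have := Finset.card_le_card hsub
      rw [Fin.card_Iio] at this
      omega
  have hfilter : Finset.univ.filter (fun j : Fin (n - 1) => (j : ℕ) < Knat)
      = Finset.univ.filter (fun j : Fin (n - 1) => y i j < 0) := by
    ext j; simp [hiff j]
  have hd : gershLower n A 0 i = A i i - ∑ k : Fin (n - 1), |y i k| := by
    rw [gershLower, gersh_sum_transfer n A y e hy]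
    simp
  have hdelta : deltaIK n y i ⟨Knat, hKlt⟩ = -∑ k : Fin (n - 1), |y i k| := by
    rw [deltaIK]
    have hsplit : ∑ k : Fin (n - 1), |y i k|
        = ∑ k ∈ Finset.univ.filter (fun j : Fin (n - 1) => (j : ℕ) < Knat), |y i k|
          + ∑ k ∈ Finset.univ.filter (fun j : Fin (n - 1) => ¬ (j : ℕ) < Knat), |y i k| :=
      (Finset.sum_filter_add_sum_filter_not _ _ _).symm
    have hneg : ∑ k ∈ Finset.univ.filter (fun j : Fin (n - 1) => (j : ℕ) < Knat), |y i k|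
        = -∑ k ∈ Finset.univ.filter (fun j : Fin (n - 1) => (j : ℕ) < Knat), y i k := by
      rw [← Finset.sum_neg_distrib]
      apply Finset.sum_congr rfl
      intro k hk
      simp only [Finset.mem_filter, Finset.mem_univ, true_and] at hk
      exact abs_of_neg ((hiff k).mpr hk)
    have hpos : ∑ k ∈ Finset.univ.filter (fun j : Fin (n - 1) => ¬ (j : ℕ) < Knat), |y i k|
        = ∑ k ∈ Finset.univ.filter (fun j : Fin (n - 1) => (Knat : ℕ) ≤ (j : ℕ)), y i k := by
      have : Finset.univ.filter (fun j : Fin (n - 1) => ¬ (j : ℕ) < Knat)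
          = Finset.univ.filter (fun j : Fin (n - 1) => (Knat : ℕ) ≤ (j : ℕ)) := by
        ext j; simp [not_lt]
      rw [this]
      apply Finset.sum_congr rfl
      intro k hk
      simp only [Finset.mem_filter, Finset.mem_univ, true_and] at hk
      have : ¬ y i k < 0 := by
        intro h
        have := (hiff k).mp h
        omega
      exact abs_of_nonneg (not_lt.mp this)
    have : (⟨Knat, hKlt⟩ : Fin n).val = Knat := rfl
    rw [this, hsplit, hneg, hpos]
    ring
  rw [hd, hdelta]
  ring

/-- If `s_l < s_k` for every pair `(k,l)` with `1 ≤ k ≤ n/2 < l ≤ n` (i.e. the set `Q` of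
the closed-form corollary is empty), then shifting gives no improvement:
`sup_{x≥0} min_i d_i(A,x) = min_i d_i(A,0)`. -/
theorem shifted_gershgorin_no_improvement (n : ℕ) (hn : 0 < n)
    (A : Matrix (Fin n) (Fin n) ℝ) (hA : A.IsSymm)
    (y : Fin n → Fin (n - 1) → ℝ) (e : ∀ i : Fin n, Fin (n - 1) ≃ {j : Fin n // j ≠ i})
    (hy : ∀ i k, y i k = A i (e i k).1) (hmono : ∀ i, Monotone (y i))
    (hQ : ∀ k l : Fin n, ((k : ℕ) + 1 : ℝ) ≤ (n : ℝ) / 2 →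
      (n : ℝ) / 2 < ((l : ℕ) + 1 : ℝ) → sK n A y l < sK n A y k) :
    (⨆ x : {x : ℝ // 0 ≤ x}, ⨅ i, gershLower n A x.1 i) =
      ⨅ i, gershLower n A 0 i := by
  classical
  have hne : Nonempty (Fin n) := ⟨⟨0, hn⟩⟩
  -- minimizer of sK over k
  obtain ⟨K₀, -, hK₀⟩ := Finset.exists_min_image Finset.univ (sK n A y)
    ⟨⟨0, hn⟩, Finset.mem_univ _⟩
  have hK₀' : ∀ k : Fin n, sK n A y K₀ ≤ sK n A y k := fun k => hK₀ k (Finset.mem_univ k)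
  -- the slope at K₀ is nonpositive
  have hslope : (n : ℝ) - 2 - 2 * (K₀ : ℕ) ≤ 0 := by
    by_contra h
    push_neg at h
    have hKhalf : ((K₀ : ℕ) + 1 : ℝ) ≤ (n : ℝ) / 2 := by linarith
    have hlast : (n : ℝ) / 2 < (((⟨n - 1, Nat.pred_lt (Nat.pos_iff_ne_zero.mp hn)⟩ : Fin n) : ℕ) + 1 : ℝ) := by
      have : (((⟨n - 1, Nat.pred_lt (Nat.pos_iff_ne_zero.mp hn)⟩ : Fin n) : ℕ) + 1 : ℝ) = (n : ℝ) := by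
        show ((n - 1 : ℕ) : ℝ) + 1 = (n : ℝ)
        rw [Nat.cast_sub (by omega : 1 ≤ n)]
        ring
      rw [this]
      have hn' : (0 : ℝ) < n := by exact_mod_cast hn
      linarith
    have := hQ K₀ ⟨n - 1, Nat.pred_lt (Nat.pos_iff_ne_zero.mp hn)⟩ hKhalf hlast
    exact absurd (hK₀' _) (not_le.mpr this)
  -- sK K₀ is attained at some row i₀
  obtain ⟨i₀, -, hi₀⟩ := Finset.exists_min_image Finset.univ
    (fun i => A i i + deltaIK n y i K₀) ⟨⟨0, hn⟩, Finset.mem_univ _⟩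
  have hsKeq : sK n A y K₀ = A i₀ i₀ + deltaIK n y i₀ K₀ := by
    apply le_antisymm
    · exact ciInf_le (Finite.bddBelow_range _) i₀
    · exact le_ciInf (fun i => hi₀ i (Finset.mem_univ i))
  -- the key inequality: for x ≥ 0, min_i d_i(x) ≤ min_i d_i(0)
  have hmain : ∀ x : ℝ, 0 ≤ x →
      (⨅ i, gershLower n A x i) ≤ ⨅ i, gershLower n A 0 i := by
    intro x hx
    have hle1 : (⨅ i, gershLower n A x i) ≤ sK n A y K₀ := by
      calc (⨅ i, gershLower n A x i) ≤ gershLower n A x i₀ :=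
            ciInf_le (Finite.bddBelow_range _) i₀
        _ ≤ A i₀ i₀ + deltaIK n y i₀ K₀ + ((n : ℝ) - 2 - 2 * (K₀ : ℕ)) * x :=
            gersh_upper n hn A y e hy i₀ K₀ x
        _ ≤ A i₀ i₀ + deltaIK n y i₀ K₀ := by nlinarith
        _ = sK n A y K₀ := hsKeq.symm
    have hle2 : sK n A y K₀ ≤ ⨅ i, gershLower n A 0 i := by
      apply le_ciInf
      intro i
      obtain ⟨K, hK⟩ := gersh_zero_eq n hn A y e hy hmono i
      calc sK n A y K₀ ≤ sK n A y K := hK₀' K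
        _ ≤ A i i + deltaIK n y i K := ciInf_le (Finite.bddBelow_range _) i
        _ = gershLower n A 0 i := hK.symm
    exact le_trans hle1 hle2
  -- assemble the sup
  have hne' : Nonempty {x : ℝ // 0 ≤ x} := ⟨⟨0, le_refl 0⟩⟩
  apply le_antisymm
  · apply ciSup_le
    intro x
    exact hmain x.1 x.2
  · have hbdd : BddAbove (Set.range (fun x : {x : ℝ // 0 ≤ x} => ⨅ i, gershLower n A x.1 i)) := by
      refine ⟨⨅ i, gershLower n A 0 i, ?_⟩
      rintro _ ⟨x, rfl⟩
      exact hmain x.1 x.2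
    exact le_ciSup hbdd (⟨0, le_refl 0⟩ : {x : ℝ // 0 ≤ x})
end

section
/- Let A be an n×n real symmetric matrix (n ≥ 2) all of whose diagonal entries are equal to a common value q. Then for every real x ≥ 0 and every eigenvalue λ of A, one has λ ≥ min_{i≠j} ( q − x − (1/2)(R_i(A − x𝟙) + R_j(A − x𝟙)) ), where R_i(B) = Σ_{j≠i} |b_{ij}| is the i-th deleted row sum of absolute values. Equivalently, λ_min(A) ≥ sup_{x≥0} min_{i≠j} (1/2)(d_i(A,x) + d_j(A,x)). -/
open Matrix in
/-- Brauer-type positivity. -/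
lemma brauer_eigenvalues_nonneg {n : ℕ} (hn : 2 ≤ n) (C : Matrix (Fin n) (Fin n) ℝ)
    (hC : C.IsHermitian) (c : ℝ) (hd : ∀ i, C i i = c)
    (hp : ∀ i j : Fin n, i ≠ j →
      (∑ k ∈ Finset.univ.erase i, |C i k|) + (∑ k ∈ Finset.univ.erase j, |C j k|) < 2 * c) :
    ∀ m, 0 ≤ hC.eigenvalues m := by
  intro m
  by_contra hν
  push_neg at hν
  set ν := hC.eigenvalues m with hνdef
  set w : Fin n → ℝ := ⇑(hC.eigenvectorBasis m) with hwdef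
  have hw : C *ᵥ w = ν • w := hC.mulVec_eigenvectorBasis m
  have hw0 : w ≠ 0 := by
    intro h
    apply hC.eigenvectorBasis.orthonormal.ne_zero m
    ext k
    exact congrFun h k
  -- pick i maximizing |w i|
  obtain ⟨i, -, hi⟩ := Finset.exists_max_image Finset.univ (fun k => |w k|)
    ⟨⟨0, by omega⟩, Finset.mem_univ _⟩
  have hwi : 0 < |w i| := by
    obtain ⟨k, hk⟩ := Function.ne_iff.mp hw0
    exact lt_of_lt_of_le (abs_pos.mpr hk) (hi k (Finset.mem_univ k))
  -- pick j maximizing |w k| over k ≠ i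
  have herase : (Finset.univ.erase i).Nonempty := by
    rw [← Finset.card_pos, Finset.card_erase_of_mem (Finset.mem_univ i), Finset.card_univ,
      Fintype.card_fin]
    omega
  obtain ⟨j, hjmem, hj⟩ := Finset.exists_max_image (Finset.univ.erase i) (fun k => |w k|) herase
  have hij : i ≠ j := (Finset.ne_of_mem_erase hjmem).symm
  have hc : (∑ k ∈ Finset.univ.erase i, |C i k|) + (∑ k ∈ Finset.univ.erase j, |C j k|)
      < 2 * c := hp i j hij
  have hRi : 0 ≤ ∑ k ∈ Finset.univ.erase i, |C i k| :=
    Finset.sum_nonneg fun k _ => abs_nonneg _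
  have hRj : 0 ≤ ∑ k ∈ Finset.univ.erase j, |C j k| :=
    Finset.sum_nonneg fun k _ => abs_nonneg _
  have hcpos : 0 < c := by linarith
  have key : ∀ (a : Fin n) (b : ℝ), (∀ k ∈ Finset.univ.erase a, |w k| ≤ b) → 0 ≤ b →
      (c - ν) * |w a| ≤ (∑ k ∈ Finset.univ.erase a, |C a k|) * b := by
    intro a b hb hb0
    have hrow : ν * w a = ∑ k, C a k * w k := by
      have := congrFun hw a
      simpa [Matrix.mulVec, dotProduct, Pi.smul_apply, smul_eq_mul] using this.symm
    have hsplit : (ν - c) * w a = ∑ k ∈ Finset.univ.erase a, C a k * w k := by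
      have h := Finset.add_sum_erase Finset.univ (fun k => C a k * w k) (Finset.mem_univ a)
      rw [hd a, ← hrow] at h
      linear_combination -h
    have h1 : |(ν - c) * w a| ≤ ∑ k ∈ Finset.univ.erase a, |C a k| * b := by
      rw [hsplit]
      refine le_trans (Finset.abs_sum_le_sum_abs _ _) (Finset.sum_le_sum fun k hk => ?_)
      rw [abs_mul]
      exact mul_le_mul_of_nonneg_left (hb k hk) (abs_nonneg _)
    rw [abs_mul, abs_of_neg (by linarith : ν - c < 0)] at h1
    calc (c - ν) * |w a| = -(ν - c) * |w a| := by ring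
    _ ≤ ∑ k ∈ Finset.univ.erase a, |C a k| * b := h1
    _ = (∑ k ∈ Finset.univ.erase a, |C a k|) * b := by rw [Finset.sum_mul]
  have h1 := key i |w j| hj (abs_nonneg _)
  have h2 := key j |w i| (fun k _ => hi k (Finset.mem_univ k)) (abs_nonneg _)
  have hd0 : 0 < c - ν := by linarith
  rcases eq_or_lt_of_le (abs_nonneg (w j)) with hz | hz
  · rw [← hz, mul_zero] at h1
    nlinarith [mul_pos hd0 hwi]
  · have hm := mul_le_mul h1 h2 (mul_nonneg hd0.le (abs_nonneg _))
      (mul_nonneg hRi (abs_nonneg _))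
    have hsq : (c - ν) ^ 2 ≤ (∑ k ∈ Finset.univ.erase i, |C i k|) *
        (∑ k ∈ Finset.univ.erase j, |C j k|) := by
      nlinarith [mul_pos hwi hz]
    nlinarith [sq_nonneg ((∑ k ∈ Finset.univ.erase i, |C i k|) -
        (∑ k ∈ Finset.univ.erase j, |C j k|)), mul_pos hcpos hcpos]

/-- Averaged-Gershgorin relaxation of the shifted Brauer bound for a symmetric matrix all of
whose diagonal entries equal `q`: for every `x ≥ 0`, every eigenvalue `μ` of `A` satisfies
`μ ≥ min_{i≠j} (q − x − (R_i(A−x𝟙) + R_j(A−x𝟙))/2)`, where `R_i(A−x𝟙) = Σ_{j≠i} |a_{ij} − x|`;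
equivalently, `λ_min(A) ≥ sup_{x≥0} min_{i≠j} (d_i(A,x) + d_j(A,x))/2`. -/
theorem averaged_shifted_gershgorin (n : ℕ) (hn : 2 ≤ n)
    (A : Matrix (Fin n) (Fin n) ℝ) (hA : A.IsHermitian)
    (q : ℝ) (hq : ∀ i, A i i = q) :
    (∀ x : ℝ, 0 ≤ x → ∀ μ ∈ spectrum ℝ A,
      (⨅ p : {p : Fin n × Fin n // p.1 ≠ p.2},
        (q - x - (1 / 2) * ((∑ j ∈ Finset.univ.erase p.1.1, |A p.1.1 j - x|) +
          (∑ j ∈ Finset.univ.erase p.1.2, |A p.1.2 j - x|)))) ≤ μ) ∧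
    (⨆ x : {x : ℝ // 0 ≤ x}, ⨅ p : {p : Fin n × Fin n // p.1 ≠ p.2},
        (1 / 2) * (gershLower n A x.1 p.1.1 + gershLower n A x.1 p.1.2)) ≤
      ⨅ i, hA.eigenvalues i := by
  have hsymm : ∀ i j, A j i = A i j := by
    intro i j
    conv_lhs => rw [← hA]
    simp [Matrix.conjTranspose_apply]
  have key : ∀ x : ℝ, 0 ≤ x → ∀ μ ∈ spectrum ℝ A,
      (⨅ p : {p : Fin n × Fin n // p.1 ≠ p.2},
        (q - x - (1 / 2) * ((∑ j ∈ Finset.univ.erase p.1.1, |A p.1.1 j - x|) +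
          (∑ j ∈ Finset.univ.erase p.1.2, |A p.1.2 j - x|)))) ≤ μ := by
    intro x hx μ hμ
    by_contra hlt
    push_neg at hlt
    set M := ⨅ p : {p : Fin n × Fin n // p.1 ≠ p.2},
        (q - x - (1 / 2) * ((∑ j ∈ Finset.univ.erase p.1.1, |A p.1.1 j - x|) +
          (∑ j ∈ Finset.univ.erase p.1.2, |A p.1.2 j - x|))) with hM
    set μ' : ℝ := (μ + M) / 2 with hμ'def
    have hμμ' : μ < μ' := by simp only [hμ'def]; linarith
    have hμ'M : μ' < M := by simp only [hμ'def]; linarith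
    -- eigenvector of A for μ
    rw [spectrum.mem_iff] at hμ
    have hdet : (algebraMap ℝ (Matrix (Fin n) (Fin n) ℝ) μ - A).det = 0 := by
      by_contra h
      exact hμ ((Matrix.isUnit_iff_isUnit_det _).mpr (isUnit_iff_ne_zero.mpr h))
    obtain ⟨v, hv0, hv⟩ := (Matrix.exists_mulVec_eq_zero_iff).mpr hdet
    have hAv : A.mulVec v = μ • v := by
      have h1 : (algebraMap ℝ (Matrix (Fin n) (Fin n) ℝ) μ - A).mulVec v
          = μ • v - A.mulVec v := by
        rw [Matrix.sub_mulVec]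
        congr 1
        rw [Algebra.algebraMap_eq_smul_one, Matrix.smul_mulVec, Matrix.one_mulVec]
      rw [hv] at h1
      exact (sub_eq_zero.mp h1.symm).symm
    -- the shifted matrix
    set C : Matrix (Fin n) (Fin n) ℝ :=
      A - x • Matrix.of (fun _ _ => (1 : ℝ)) - μ' • 1 with hCdef
    have hCentry : ∀ i k : Fin n, i ≠ k → C i k = A i k - x := by
      intro i k hik
      simp [hCdef, Matrix.sub_apply, Matrix.smul_apply, Matrix.one_apply_ne hik,
        Matrix.of_apply]
    have hCdiag : ∀ i : Fin n, C i i = q - x - μ' := by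
      intro i
      simp [hCdef, Matrix.sub_apply, Matrix.smul_apply, Matrix.one_apply_eq,
        Matrix.of_apply, hq i]
    have hCH : C.IsHermitian := by
      show C.conjTranspose = C
      ext i j
      rcases eq_or_ne i j with rfl | hij
      · simp [Matrix.conjTranspose_apply]
      · rw [Matrix.conjTranspose_apply, hCentry i j hij, hCentry j i (Ne.symm hij),
          hsymm i j]
        simp
    have hErow : ∀ i : Fin n, ∑ k ∈ Finset.univ.erase i, |C i k|
        = ∑ k ∈ Finset.univ.erase i, |A i k - x| := by
      intro i
      refine Finset.sum_congr rfl fun k hk => ?_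
      rw [hCentry i k (Finset.ne_of_mem_erase hk).symm]
    have hbdd : BddBelow (Set.range fun p : {p : Fin n × Fin n // p.1 ≠ p.2} =>
        (q - x - (1 / 2) * ((∑ j ∈ Finset.univ.erase p.1.1, |A p.1.1 j - x|) +
          (∑ j ∈ Finset.univ.erase p.1.2, |A p.1.2 j - x|)))) :=
      (Set.finite_range _).bddBelow
    have hp : ∀ i j : Fin n, i ≠ j →
        (∑ k ∈ Finset.univ.erase i, |C i k|) + (∑ k ∈ Finset.univ.erase j, |C j k|)
          < 2 * (q - x - μ') := by
      intro i j hij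
      rw [hErow i, hErow j]
      have hle : M ≤ q - x - (1 / 2) * ((∑ k ∈ Finset.univ.erase i, |A i k - x|) +
          (∑ k ∈ Finset.univ.erase j, |A j k - x|)) := ciInf_le hbdd ⟨(i, j), hij⟩
      linarith
    have hpsd : C.PosSemidef :=
      hCH.posSemidef_iff_eigenvalues_nonneg.mpr
        (brauer_eigenvalues_nonneg hn C hCH (q - x - μ') hCdiag hp)
    have h0 := hpsd.dotProduct_mulVec_nonneg v
    have hCv : C.mulVec v = μ • v - x • ((Matrix.of fun _ _ => (1:ℝ)).mulVec v) - μ' • v := by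
      rw [hCdef, Matrix.sub_mulVec, Matrix.sub_mulVec, hAv, Matrix.smul_mulVec,
        Matrix.smul_mulVec, Matrix.one_mulVec]
    have hs : dotProduct v ((Matrix.of fun _ _ => (1:ℝ)).mulVec v)
        = (∑ k, v k) * (∑ k, v k) := by
      simp [Matrix.mulVec, dotProduct, Matrix.of_apply, ← Finset.sum_mul]
    have hvv : 0 < dotProduct v v := by
      refine lt_of_le_of_ne (Finset.sum_nonneg fun k _ => mul_self_nonneg _) ?_
      exact fun h => hv0 (dotProduct_self_eq_zero.mp h.symm)
    have hfinal : dotProduct (star v) (C.mulVec v)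
        = (μ - μ') * dotProduct v v - x * ((∑ k, v k) * (∑ k, v k)) := by
      rw [star_trivial, hCv, dotProduct_sub, dotProduct_sub,
        dotProduct_smul, dotProduct_smul, dotProduct_smul, hs]
      simp [smul_eq_mul]
      ring
    rw [hfinal] at h0
    nlinarith [mul_nonneg hx (mul_self_nonneg (∑ k, v k)), mul_pos (show (0:ℝ) < μ' - μ by linarith) hvv]
  refine ⟨key, ?_⟩
  have : Nonempty {x : ℝ // (0:ℝ) ≤ x} := ⟨⟨0, le_refl 0⟩⟩
  have hnFin : Nonempty (Fin n) := ⟨⟨0, by omega⟩⟩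
  refine ciSup_le fun x => ?_
  refine le_ciInf fun i => ?_
  have heq : (fun p : {p : Fin n × Fin n // p.1 ≠ p.2} =>
      (1 / 2) * (gershLower n A x.1 p.1.1 + gershLower n A x.1 p.1.2))
      = fun p : {p : Fin n × Fin n // p.1 ≠ p.2} =>
      (q - x.1 - (1 / 2) * ((∑ j ∈ Finset.univ.erase p.1.1, |A p.1.1 j - x.1|) +
          (∑ j ∈ Finset.univ.erase p.1.2, |A p.1.2 j - x.1|))) := by
    funext p
    simp only [gershLower, hq]
    ring
  rw [heq]
  exact key x.1 x.2 (hA.eigenvalues i) (hA.eigenvalues_mem_spectrum_real i)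
end

section
/- Let G be a simple graph on n vertices with adjacency matrix A(G). Then every eigenvalue λ of A(G) satisfies all three inequalities: λ ≥ −Δ(G), λ ≥ −n/2, and λ ≥ δ(G) − n; that is, λ_min(A(G)) ≥ max(−Δ(G), −n/2, δ(G) − n). -/
open Finset Matrix

lemma exists_eigvec {n : ℕ} (A : Matrix (Fin n) (Fin n) ℝ) {μ : ℝ}
    (hμ : μ ∈ spectrum ℝ A) : ∃ v : Fin n → ℝ, v ≠ 0 ∧ A *ᵥ v = μ • v := by
  rw [spectrum.mem_iff] at hμ
  have hdet : (algebraMap ℝ (Matrix (Fin n) (Fin n) ℝ) μ - A).det = 0 := by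
    by_contra h
    exact hμ ((Matrix.isUnit_iff_isUnit_det _).mpr (isUnit_iff_ne_zero.mpr h))
  obtain ⟨v, hv0, hv⟩ := Matrix.exists_mulVec_eq_zero_iff.mpr hdet
  refine ⟨v, hv0, ?_⟩
  have h2 : (algebraMap ℝ (Matrix (Fin n) (Fin n) ℝ) μ) *ᵥ v - A *ᵥ v = 0 := by
    rw [← Matrix.sub_mulVec, hv]
  have h3 : (algebraMap ℝ (Matrix (Fin n) (Fin n) ℝ) μ) *ᵥ v = μ • v := by
    ext i
    simp [Matrix.algebraMap_eq_diagonal, Matrix.mulVec_diagonal]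
  rw [h3] at h2
  exact (sub_eq_zero.mp h2).symm

set_option maxHeartbeats 1000000 in
/-- Eigenvalue bounds for the adjacency matrix of a simple graph: every eigenvalue `μ`
of `A(G)` satisfies `μ ≥ −Δ(G)`, `μ ≥ −n/2`, and `μ ≥ δ(G) − n`; that is,
`λ_min(A(G)) ≥ max(−Δ(G), −n/2, δ(G) − n)`. -/
theorem adjacency_eigenvalue_lower_bounds (n : ℕ) (G : SimpleGraph (Fin n))
    [DecidableRel G.Adj] (μ : ℝ) (hμ : μ ∈ spectrum ℝ (G.adjMatrix ℝ)) :
    -(G.maxDegree : ℝ) ≤ μ ∧ -((n : ℝ) / 2) ≤ μ ∧ (G.minDegree : ℝ) - n ≤ μ := by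
  obtain ⟨v, hv0, hv⟩ := exists_eigvec _ hμ
  set S : ℝ := ∑ i, v i ^ 2 with hSdef
  have hSpos : 0 < S := by
    obtain ⟨i, hi⟩ := Function.ne_iff.mp hv0
    have : 0 < v i ^ 2 := lt_of_le_of_ne (sq_nonneg _) (Ne.symm (pow_ne_zero 2 hi))
    exact Finset.sum_pos' (fun j _ => sq_nonneg _) ⟨i, Finset.mem_univ i, this⟩
  set Q : ℝ := ∑ i, ∑ j, if G.Adj i j then v i * v j else 0 with hQdef
  have key : μ * S = Q := by
    have h := congrArg (fun w => v ⬝ᵥ w) hv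
    simp only [SimpleGraph.dotProduct_mulVec_adjMatrix, dotProduct_smul,
      smul_eq_mul] at h
    rw [hQdef, h]
    congr 1
    simp only [hSdef, sq, dotProduct]
  -- helper: row sums with constant depending on i
  have hrow : ∀ (c : Fin n → ℝ) (i : Fin n),
      (∑ j, if G.Adj i j then c i else 0) = (G.degree i : ℝ) * c i := by
    intro c i
    rw [← Finset.sum_filter, ← SimpleGraph.neighborFinset_eq_filter,
      Finset.sum_const, SimpleGraph.card_neighborFinset_eq_degree, nsmul_eq_mul]
  -- swap helper
  have hswap : ∀ (c : Fin n → ℝ),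
      (∑ i, ∑ j, if G.Adj i j then c j else 0) = ∑ i, (G.degree i : ℝ) * c i := by
    intro c
    rw [Finset.sum_comm]
    refine Finset.sum_congr rfl fun j _ => ?_
    rw [← hrow c j]
    refine Finset.sum_congr rfl fun i _ => ?_
    simp [SimpleGraph.adj_comm]
  have conclude : ∀ c : ℝ, c * S ≤ Q → c ≤ μ := by
    intro c h
    rw [← key] at h
    exact le_of_mul_le_mul_right h hSpos
  -- Bound 1 : μ ≥ -Δ
  have hdegsum : (∑ i, (G.degree i : ℝ) * v i ^ 2) ≤ (G.maxDegree : ℝ) * S := by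
    rw [hSdef, Finset.mul_sum]
    exact Finset.sum_le_sum fun i _ => mul_le_mul_of_nonneg_right
      (by exact_mod_cast G.degree_le_maxDegree i) (sq_nonneg _)
  have bound1 : -(G.maxDegree : ℝ) * S ≤ Q := by
    have expand : ∀ i j : Fin n, (if G.Adj i j then ((v i + v j) ^ 2 / 2 : ℝ) else 0)
        = (if G.Adj i j then v i * v j else 0)
          + (1 / 2) * (if G.Adj i j then v i ^ 2 else 0)
          + (1 / 2) * (if G.Adj i j then v j ^ 2 else 0) := by
      intro i j; split <;> ring
    have nn : (0:ℝ) ≤ ∑ i, ∑ j, (if G.Adj i j then ((v i + v j) ^ 2 / 2 : ℝ) else 0) :=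
      Finset.sum_nonneg fun i _ => Finset.sum_nonneg fun j _ => by split <;> positivity
    have heq : (∑ i, ∑ j, (if G.Adj i j then ((v i + v j) ^ 2 / 2 : ℝ) else 0))
        = Q + ∑ i, (G.degree i : ℝ) * v i ^ 2 := by
      simp_rw [expand, Finset.sum_add_distrib, ← Finset.mul_sum]
      rw [Finset.sum_congr rfl fun i _ => hrow (fun k => v k ^ 2) i, hswap (fun k => v k ^ 2),
        ← hQdef]
      ring
    rw [heq] at nn
    linarith
  -- Bound 3 : μ ≥ δ - n
  have hfilter : ∀ i : Fin n, Finset.univ.filter (fun j => i ≠ j ∧ ¬ G.Adj i j)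
      = Finset.univ \ insert i (G.neighborFinset i) := by
    intro i; ext j
    simp only [Finset.mem_filter, Finset.mem_univ, true_and, Finset.mem_sdiff,
      Finset.mem_insert, SimpleGraph.mem_neighborFinset, not_or]
    constructor
    · rintro ⟨h1, h2⟩; exact ⟨fun h => h1 h.symm, h2⟩
    · rintro ⟨h1, h2⟩; exact ⟨fun h => h1 h.symm, h2⟩
  have hcard : ∀ i : Fin n, (Finset.univ.filter (fun j => i ≠ j ∧ ¬ G.Adj i j)).card
      = n - (G.degree i + 1) := by
    intro i
    rw [hfilter, Finset.card_sdiff_of_subset (Finset.subset_univ _), Finset.card_univ, Fintype.card_fin,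
      Finset.card_insert_of_notMem (SimpleGraph.notMem_neighborFinset_self G i),
      SimpleGraph.card_neighborFinset_eq_degree]
  have hrow2 : ∀ (c : Fin n → ℝ) (i : Fin n),
      (∑ j, if i ≠ j ∧ ¬ G.Adj i j then c i else 0) = ((n - (G.degree i + 1) : ℕ) : ℝ) * c i := by
    intro c i
    rw [← Finset.sum_filter, Finset.sum_const, hcard, nsmul_eq_mul]
  have hsymm : ∀ i j : Fin n, (i ≠ j ∧ ¬ G.Adj i j) ↔ (j ≠ i ∧ ¬ G.Adj j i) := by
    intro i j
    constructor <;> rintro ⟨h1, h2⟩ <;> exact ⟨h1.symm, fun h => h2 h.symm⟩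
  have hswap2 : ∀ (c : Fin n → ℝ), (∑ i, ∑ j, if i ≠ j ∧ ¬ G.Adj i j then c j else 0)
      = ∑ i, ((n - (G.degree i + 1) : ℕ) : ℝ) * c i := by
    intro c
    rw [Finset.sum_comm]
    refine Finset.sum_congr rfl fun j _ => ?_
    rw [← hrow2 c j]
    exact Finset.sum_congr rfl fun i _ => if_congr (hsymm i j) rfl rfl
  have hcast : ∀ i : Fin n, ((n - (G.degree i + 1) : ℕ) : ℝ) ≤ (n : ℝ) - 1 - G.minDegree := by
    intro i
    have hlt : G.degree i < n := by
      have := G.degree_lt_card_verts i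
      rwa [Fintype.card_fin] at this
    have hmin : G.minDegree ≤ G.degree i := G.minDegree_le_degree i
    rw [Nat.cast_sub (by omega)]
    push_cast
    have : (G.minDegree : ℝ) ≤ G.degree i := by exact_mod_cast hmin
    linarith
  set T : ℝ := ∑ i, ∑ j, if i ≠ j then (v i * v j : ℝ) else 0 with hTdef
  set R : ℝ := ∑ i, ∑ j, if i ≠ j ∧ ¬ G.Adj i j then (v i * v j : ℝ) else 0 with hRdef
  have hT : T = (∑ i, v i) ^ 2 - S := by
    have hterm : ∀ i j : Fin n, (if i ≠ j then (v i * v j : ℝ) else 0)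
        = v i * v j - (if i = j then v i * v j else 0) := by
      intro i j; by_cases h : i = j <;> simp [h]
    rw [hTdef]
    simp_rw [hterm, Finset.sum_sub_distrib, Finset.sum_ite_eq, Finset.mem_univ, if_true,
      ← Finset.mul_sum]
    rw [← Finset.sum_mul, hSdef]
    congr 1
    · ring
    · exact Finset.sum_congr rfl fun i _ => (sq (v i)).symm
  have hQT : Q = T - R := by
    rw [hQdef, hTdef, hRdef, ← Finset.sum_sub_distrib]
    refine Finset.sum_congr rfl fun i _ => ?_
    rw [← Finset.sum_sub_distrib]
    refine Finset.sum_congr rfl fun j _ => ?_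
    by_cases h : G.Adj i j
    · simp [h, h.ne]
    · by_cases h2 : i = j <;> simp [h, h2]
  have hR : R ≤ ((n : ℝ) - 1 - G.minDegree) * S := by
    have step1 : R ≤ ∑ i, ∑ j, (if i ≠ j ∧ ¬ G.Adj i j then ((v i ^ 2 + v j ^ 2) / 2 : ℝ) else 0) := by
      rw [hRdef]
      refine Finset.sum_le_sum fun i _ => Finset.sum_le_sum fun j _ => ?_
      split
      · nlinarith [sq_nonneg (v i - v j)]
      · exact le_rfl
    have expand : ∀ i j : Fin n,
        (if i ≠ j ∧ ¬ G.Adj i j then ((v i ^ 2 + v j ^ 2) / 2 : ℝ) else 0)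
        = (1 / 2) * (if i ≠ j ∧ ¬ G.Adj i j then v i ^ 2 else 0)
          + (1 / 2) * (if i ≠ j ∧ ¬ G.Adj i j then v j ^ 2 else 0) := by
      intro i j; split <;> ring
    have step2 : (∑ i, ∑ j, (if i ≠ j ∧ ¬ G.Adj i j then ((v i ^ 2 + v j ^ 2) / 2 : ℝ) else 0))
        = ∑ i, ((n - (G.degree i + 1) : ℕ) : ℝ) * v i ^ 2 := by
      simp_rw [expand, Finset.sum_add_distrib, ← Finset.mul_sum]
      rw [Finset.sum_congr rfl fun i _ => hrow2 (fun k => v k ^ 2) i,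
        hswap2 (fun k => v k ^ 2)]
      ring
    have step3 : (∑ i, ((n - (G.degree i + 1) : ℕ) : ℝ) * v i ^ 2)
        ≤ ((n : ℝ) - 1 - G.minDegree) * S := by
      rw [hSdef, Finset.mul_sum]
      exact Finset.sum_le_sum fun i _ =>
        mul_le_mul_of_nonneg_right (hcast i) (sq_nonneg _)
    calc R ≤ _ := step1
      _ = _ := step2
      _ ≤ _ := step3
  have bound3 : ((G.minDegree : ℝ) - n) * S ≤ Q := by
    have hsq0 : (0:ℝ) ≤ (∑ i, v i) ^ 2 := sq_nonneg _
    rw [hQT, hT]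
    nlinarith [hR, hSpos.le]
  -- Bound 2 : μ ≥ -n/2
  have bound2 : -((n : ℝ) / 2) * S ≤ Q := by
    set p : Fin n → ℝ := fun i => max (v i) 0 with hp
    set q : Fin n → ℝ := fun i => max (-v i) 0 with hq
    have hp0 : ∀ i, 0 ≤ p i := fun i => le_max_right _ _
    have hq0 : ∀ i, 0 ≤ q i := fun i => le_max_right _ _
    have hv' : ∀ i, v i = p i - q i := by
      intro i; rcases le_total (v i) 0 with h | h
      · simp [hp, hq, max_eq_right h, max_eq_left (neg_nonneg.mpr h)]
      · simp [hp, hq, max_eq_left h, max_eq_right (neg_nonpos.mpr h)]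
    have hsq : ∀ i, v i ^ 2 = p i ^ 2 + q i ^ 2 := by
      intro i; rcases le_total (v i) 0 with h | h
      · simp [hp, hq, max_eq_right h, max_eq_left (neg_nonneg.mpr h), neg_sq]
      · simp [hp, hq, max_eq_left h, max_eq_right (neg_nonpos.mpr h)]
    have h1 : (∑ i, ∑ j, -(p i * q j + q i * p j)) ≤ Q := by
      rw [hQdef]
      refine Finset.sum_le_sum fun i _ => Finset.sum_le_sum fun j _ => ?_
      split
      · rw [hv' i, hv' j]
        nlinarith [mul_nonneg (hp0 i) (hp0 j), mul_nonneg (hq0 i) (hq0 j)]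
      · have : (0:ℝ) ≤ p i * q j + q i * p j :=
          add_nonneg (mul_nonneg (hp0 i) (hq0 j)) (mul_nonneg (hq0 i) (hp0 j))
        linarith
    set a : ℝ := ∑ i, p i with hadef
    set b : ℝ := ∑ i, q i with hbdef
    have h2 : (∑ i, ∑ j, -(p i * q j + q i * p j)) = -(2 * (a * b)) := by
      simp_rw [Finset.sum_neg_distrib, Finset.sum_add_distrib, ← Finset.mul_sum]
      rw [← Finset.sum_mul, ← Finset.sum_mul, ← hadef, ← hbdef]
      ring
    set Sp : ℝ := ∑ i, p i ^ 2 with hSpdef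
    set Sq : ℝ := ∑ i, q i ^ 2 with hSqdef
    have hSsum : S = Sp + Sq := by
      rw [hSdef, hSpdef, hSqdef, ← Finset.sum_add_distrib]
      exact Finset.sum_congr rfl fun i _ => hsq i
    have hSp0 : 0 ≤ Sp := Finset.sum_nonneg fun i _ => sq_nonneg _
    have hSq0 : 0 ≤ Sq := Finset.sum_nonneg fun i _ => sq_nonneg _
    have ha0 : 0 ≤ a := Finset.sum_nonneg fun i _ => hp0 i
    have hb0 : 0 ≤ b := Finset.sum_nonneg fun i _ => hq0 i
    set P : Finset (Fin n) := Finset.univ.filter (fun i => 0 < v i) with hPdef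
    set N : Finset (Fin n) := Finset.univ.filter (fun i => v i < 0) with hNdef
    have ha : a = ∑ i ∈ P, p i := by
      rw [hadef, hPdef]
      refine (Finset.sum_filter_of_ne fun i _ h => ?_).symm
      by_contra hc
      push_neg at hc
      exact h (by simp [hp, max_eq_right hc])
    have hb : b = ∑ i ∈ N, q i := by
      rw [hbdef, hNdef]
      refine (Finset.sum_filter_of_ne fun i _ h => ?_).symm
      by_contra hc
      push_neg at hc
      exact h (by simp [hq, max_eq_right (neg_nonpos.mpr hc)])
    have haCS : a ^ 2 ≤ (P.card : ℝ) * Sp := by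
      have hCS := Finset.sum_mul_sq_le_sq_mul_sq P p (fun _ => (1:ℝ))
      simp only [mul_one, one_pow, Finset.sum_const, nsmul_eq_mul] at hCS
      have hsub : (∑ i ∈ P, p i ^ 2) ≤ Sp :=
        Finset.sum_le_sum_of_subset_of_nonneg (Finset.filter_subset _ _)
          (fun i _ _ => sq_nonneg _)
      calc a ^ 2 = (∑ i ∈ P, p i) ^ 2 := by rw [ha]
        _ ≤ (∑ i ∈ P, p i ^ 2) * P.card := hCS
        _ ≤ Sp * P.card := mul_le_mul_of_nonneg_right hsub (Nat.cast_nonneg _)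
        _ = (P.card : ℝ) * Sp := mul_comm _ _
    have hbCS : b ^ 2 ≤ (N.card : ℝ) * Sq := by
      have hCS := Finset.sum_mul_sq_le_sq_mul_sq N q (fun _ => (1:ℝ))
      simp only [mul_one, one_pow, Finset.sum_const, nsmul_eq_mul] at hCS
      have hsub : (∑ i ∈ N, q i ^ 2) ≤ Sq :=
        Finset.sum_le_sum_of_subset_of_nonneg (Finset.filter_subset _ _)
          (fun i _ _ => sq_nonneg _)
      calc b ^ 2 = (∑ i ∈ N, q i) ^ 2 := by rw [hb]
        _ ≤ (∑ i ∈ N, q i ^ 2) * N.card := hCS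
        _ ≤ Sq * N.card := mul_le_mul_of_nonneg_right hsub (Nat.cast_nonneg _)
        _ = (N.card : ℝ) * Sq := mul_comm _ _
    have hcardPN : (P.card : ℝ) + N.card ≤ n := by
      have hdisj : Disjoint P N := by
        rw [Finset.disjoint_left]
        intro i hiP hiN
        rw [hPdef, Finset.mem_filter] at hiP
        rw [hNdef, Finset.mem_filter] at hiN
        linarith [hiP.2, hiN.2]
      have hc := Finset.card_union_of_disjoint hdisj
      have h2 := Finset.card_le_univ (P ∪ N)
      rw [hc, Fintype.card_fin] at h2
      exact_mod_cast h2
    have knn : (0:ℝ) ≤ (P.card : ℝ) := Nat.cast_nonneg _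
    have mnn : (0:ℝ) ≤ (N.card : ℝ) := Nat.cast_nonneg _
    have hfin : 2 * (a * b) ≤ (n : ℝ) / 2 * S := by
      have hn2 : ((P.card : ℝ) + N.card) ^ 2 ≤ (n : ℝ) ^ 2 := by nlinarith
      have s1 : (P.card : ℝ) * N.card ≤ (n : ℝ) ^ 2 / 4 := by
        nlinarith [sq_nonneg ((P.card : ℝ) - N.card)]
      have s2 : Sp * Sq ≤ S ^ 2 / 4 := by nlinarith [sq_nonneg (Sp - Sq)]
      have m1 : a ^ 2 * b ^ 2 ≤ ((P.card : ℝ) * Sp) * ((N.card : ℝ) * Sq) :=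
        mul_le_mul haCS hbCS (sq_nonneg _) (mul_nonneg knn hSp0)
      have m2 : ((P.card : ℝ) * N.card) * (Sp * Sq) ≤ ((n : ℝ) ^ 2 / 4) * (S ^ 2 / 4) :=
        mul_le_mul s1 s2 (mul_nonneg hSp0 hSq0) (by positivity)
      have hsq2 : (2 * (a * b)) ^ 2 ≤ ((n : ℝ) / 2 * S) ^ 2 := by
        calc (2 * (a * b)) ^ 2 = 4 * (a ^ 2 * b ^ 2) := by ring
          _ ≤ 4 * (((P.card : ℝ) * Sp) * ((N.card : ℝ) * Sq)) := by linarith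
          _ = 4 * (((P.card : ℝ) * N.card) * (Sp * Sq)) := by ring
          _ ≤ 4 * (((n : ℝ) ^ 2 / 4) * (S ^ 2 / 4)) := by linarith
          _ = ((n : ℝ) / 2 * S) ^ 2 := by ring
      exact le_of_pow_le_pow_left₀ two_ne_zero (by positivity) hsq2
    rw [h2] at h1
    linarith
  exact ⟨conclude _ bound1, conclude _ bound2, conclude _ bound3⟩
end

section
/- Let G be a simple graph on n vertices with adjacency matrix A = A(G). Then the shifted Gershgorin lower bound for A is exactly sup_{x≥0} min_{1≤i≤n} d_i(A,x) = max(−Δ(G), −n/2, δ(G) − n), where d_i(A,x) = −x − Σ_{j≠i} |a_{ij} − x|. In particular: the value is −Δ(G) when Δ(G) < n/2; it is −n/2 when δ(G) ≤ n/2 ≤ Δ(G); and it is δ(G) − n when δ(G) > n/2. -/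
lemma gersh_formula (n : ℕ) (hn : 0 < n) (G : SimpleGraph (Fin n)) [DecidableRel G.Adj]
    (x : ℝ) (hx : 0 ≤ x) (i : Fin n) :
    gershLower n (G.adjMatrix ℝ) x i
      = (G.degree i : ℝ) * (x - |1 - x|) - n * x := by
  have hAA : (G.adjMatrix ℝ) i i = 0 := by simp
  have hterm : ∀ j ∈ Finset.univ.erase i,
      |(G.adjMatrix ℝ) i j - x| = x + (if G.Adj i j then |1 - x| - x else 0) := by
    intro j _
    by_cases h : G.Adj i j
    · simp [h]
    · simp [SimpleGraph.adjMatrix_apply, h, abs_of_nonneg hx]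
  have hfilt : (Finset.univ.erase i).filter (G.Adj i) = G.neighborFinset i := by
    ext j
    simp only [Finset.mem_filter, Finset.mem_erase, Finset.mem_univ,
      SimpleGraph.mem_neighborFinset, true_and, and_true]
    exact ⟨fun h => h.2, fun h => ⟨(G.ne_of_adj h).symm, h⟩⟩
  unfold gershLower
  rw [hAA, Finset.sum_congr rfl hterm, Finset.sum_add_distrib, Finset.sum_const,
    ← Finset.sum_filter, hfilt, Finset.sum_const,
    Finset.card_erase_of_mem (Finset.mem_univ i), Finset.card_univ, Fintype.card_fin,
    SimpleGraph.card_neighborFinset_eq_degree]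
  rw [nsmul_eq_mul, nsmul_eq_mul, Nat.cast_sub hn]
  push_cast
  ring

set_option maxHeartbeats 1000000 in
/-- The shifted Gershgorin lower bound for the adjacency matrix of a simple graph on `n`
vertices is exactly `max(−Δ(G), −n/2, δ(G) − n)`; in particular it equals `−Δ(G)` when
`Δ(G) < n/2`, equals `−n/2` when `δ(G) ≤ n/2 ≤ Δ(G)`, and equals `δ(G) − n` when
`δ(G) > n/2`. -/
theorem adjacency_shifted_gershgorin (n : ℕ) (hn : 0 < n) (G : SimpleGraph (Fin n))
    [DecidableRel G.Adj] :
    ((⨆ x : {x : ℝ // 0 ≤ x}, ⨅ i, gershLower n (G.adjMatrix ℝ) x.1 i) =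
      max (-(G.maxDegree : ℝ)) (max (-((n : ℝ) / 2)) ((G.minDegree : ℝ) - n))) ∧
    ((G.maxDegree : ℝ) < (n : ℝ) / 2 →
      (⨆ x : {x : ℝ // 0 ≤ x}, ⨅ i, gershLower n (G.adjMatrix ℝ) x.1 i) =
        -(G.maxDegree : ℝ)) ∧
    ((G.minDegree : ℝ) ≤ (n : ℝ) / 2 ∧ (n : ℝ) / 2 ≤ (G.maxDegree : ℝ) →
      (⨆ x : {x : ℝ // 0 ≤ x}, ⨅ i, gershLower n (G.adjMatrix ℝ) x.1 i) =
        -((n : ℝ) / 2)) ∧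
    ((n : ℝ) / 2 < (G.minDegree : ℝ) →
      (⨆ x : {x : ℝ // 0 ≤ x}, ⨅ i, gershLower n (G.adjMatrix ℝ) x.1 i) =
        (G.minDegree : ℝ) - n) := by
  haveI : Nonempty (Fin n) := ⟨⟨0, hn⟩⟩
  haveI : Nonempty {x : ℝ // 0 ≤ x} := ⟨⟨0, le_refl 0⟩⟩
  set Δ : ℝ := (G.maxDegree : ℝ) with hΔ
  set δ : ℝ := (G.minDegree : ℝ) with hδ
  set M : ℝ := max (-Δ) (max (-((n : ℝ) / 2)) (δ - n)) with hM
  have hdegΔ : ∀ i : Fin n, (G.degree i : ℝ) ≤ Δ :=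
    fun i => Nat.cast_le.mpr (G.degree_le_maxDegree i)
  have hδdeg : ∀ i : Fin n, δ ≤ (G.degree i : ℝ) :=
    fun i => Nat.cast_le.mpr (G.minDegree_le_degree i)
  have hδΔ : δ ≤ Δ := le_trans (hδdeg ⟨0, hn⟩) (hdegΔ ⟨0, hn⟩)
  have hn1 : (1 : ℝ) ≤ n := by exact_mod_cast hn
  -- upper bound
  have upper : ∀ x : {x : ℝ // 0 ≤ x}, (⨅ i, gershLower n (G.adjMatrix ℝ) x.1 i) ≤ M := by
    rintro ⟨x, hx⟩
    have hbb : BddBelow (Set.range fun i => gershLower n (G.adjMatrix ℝ) x i) :=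
      (Set.finite_range _).bddBelow
    rcases le_or_gt x (1/2) with h1 | h1
    · obtain ⟨v, hv⟩ := G.exists_maximal_degree_vertex
      refine le_trans (ciInf_le hbb v) ?_
      rw [gersh_formula n hn G x hx v]
      have hdv : (G.degree v : ℝ) = Δ := by rw [hΔ, hv]
      rw [hdv, abs_of_nonneg (by linarith : (0:ℝ) ≤ 1 - x)]
      rcases le_or_gt Δ ((n:ℝ)/2) with h2 | h2
      · exact le_trans (by nlinarith) (le_max_left _ _)
      · exact le_trans (by nlinarith)
          (le_trans (le_max_left _ _) (le_max_right _ _))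
    · obtain ⟨w, hw⟩ := G.exists_minimal_degree_vertex
      refine le_trans (ciInf_le hbb w) ?_
      rw [gersh_formula n hn G x hx w]
      have hdw : (G.degree w : ℝ) = δ := by rw [hδ, hw]
      rw [hdw]
      rcases le_or_gt x 1 with h3 | h3
      · rw [abs_of_nonneg (by linarith : (0:ℝ) ≤ 1 - x)]
        rcases le_or_gt δ ((n:ℝ)/2) with h2 | h2
        · exact le_trans (by nlinarith)
            (le_trans (le_max_left _ _) (le_max_right _ _))
        · exact le_trans (by nlinarith)
            (le_trans (le_max_right _ _) (le_max_right _ _))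
      · rw [abs_of_nonpos (by linarith : 1 - x ≤ (0:ℝ))]
        exact le_trans (by nlinarith)
          (le_trans (le_max_right _ _) (le_max_right _ _))
  have hub : BddAbove (Set.range fun x : {x : ℝ // 0 ≤ x} =>
      ⨅ i, gershLower n (G.adjMatrix ℝ) x.1 i) := by
    refine ⟨M, ?_⟩
    rintro _ ⟨x, rfl⟩
    exact upper x
  -- lower bound: exists x₀ with M ≤ every row value
  have lower : ∃ x₀ : {x : ℝ // 0 ≤ x}, ∀ i, M ≤ gershLower n (G.adjMatrix ℝ) x₀.1 i := by
    rcases le_or_gt Δ ((n:ℝ)/2) with h2 | h2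
    · refine ⟨⟨0, le_refl 0⟩, fun i => ?_⟩
      rw [gersh_formula n hn G 0 (le_refl 0) i]
      have h0 : |1 - (0:ℝ)| = 1 := by norm_num
      rw [h0]
      have hi := hdegΔ i
      have hi2 := hδdeg i
      refine max_le (by nlinarith) (max_le (by nlinarith) (by nlinarith))
    · rcases le_or_gt δ ((n:ℝ)/2) with h3 | h3
      · refine ⟨⟨1/2, by norm_num⟩, fun i => ?_⟩
        rw [gersh_formula n hn G (1/2) (by norm_num) i]
        have h0 : |1 - (1/2:ℝ)| = 1/2 := by norm_num
        rw [h0]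
        refine max_le (by nlinarith) (max_le (by nlinarith) (by nlinarith))
      · refine ⟨⟨1, by norm_num⟩, fun i => ?_⟩
        rw [gersh_formula n hn G 1 (by norm_num) i]
        have h0 : |1 - (1:ℝ)| = 0 := by norm_num
        rw [h0]
        have hi := hdegΔ i
        have hi2 := hδdeg i
        refine max_le (by nlinarith) (max_le (by nlinarith) (by nlinarith))
  have hmain : (⨆ x : {x : ℝ // 0 ≤ x}, ⨅ i, gershLower n (G.adjMatrix ℝ) x.1 i) = M := by
    refine le_antisymm (ciSup_le upper) ?_
    obtain ⟨x₀, hx₀⟩ := lower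
    exact le_trans (le_ciInf hx₀) (le_ciSup hub x₀)
  refine ⟨hmain, ?_, ?_, ?_⟩
  · intro h
    rw [hmain, hM]
    rw [max_eq_left (max_le (by linarith) (by linarith))]
  · rintro ⟨h1, h2⟩
    rw [hmain, hM]
    rw [max_eq_left (by linarith : δ - n ≤ -((n:ℝ)/2)),
      max_eq_right (by linarith : -Δ ≤ -((n:ℝ)/2))]
  · intro h
    rw [hmain, hM]
    rw [max_eq_right (by linarith : -((n:ℝ)/2) ≤ δ - n),
      max_eq_right (by linarith : -Δ ≤ δ - n)]
end

section
/- Let G be a simple graph on n ≥ 2 vertices with adjacency matrix A(G). Then every eigenvalue λ of A(G) satisfies λ ≥ −1 − √((n − 1 − δ(G))·(n − 1 − δ²(G))), where δ(G) is the minimum degree and δ²(G) is the second-smallest degree of G. (This is the shifted Brauer bound at shift x = 1, a bound in terms of the 'bottom two' degrees of the graph.) -/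
open Matrix Finset

section aux

lemma exists_eigenvec {n : ℕ} (M : Matrix (Fin n) (Fin n) ℝ) {μ : ℝ}
    (hμ : μ ∈ spectrum ℝ M) : ∃ x : Fin n → ℝ, x ≠ 0 ∧ M.mulVec x = μ • x := by
  have h1 : μ ∈ spectrum ℝ (Matrix.toLin' M) := by
    rw [show Matrix.toLin' M = Matrix.toLinAlgEquiv' M from rfl, AlgEquiv.spectrum_eq]
    exact hμ
  have h2 : Module.End.HasEigenvalue (Matrix.toLin' M) μ :=
    Module.End.HasEigenvalue.of_mem_spectrum h1
  obtain ⟨x, hx⟩ := h2.exists_hasEigenvector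
  exact ⟨x, hx.2, by simpa [Matrix.toLin'_apply] using hx.apply_eq_smul⟩

lemma real_inner_eq_dot {n : ℕ} (x y : EuclideanSpace ℝ (Fin n)) :
    @inner ℝ _ _ x y = (x : Fin n → ℝ) ⬝ᵥ (y : Fin n → ℝ) := by
  rw [EuclideanSpace.inner_eq_star_dotProduct]
  rw [star_trivial]; exact dotProduct_comm _ _

lemma rayleigh_max {n : ℕ} (hn : 0 < n) {B : Matrix (Fin n) (Fin n) ℝ}
    (hB : B.IsHermitian) :
    ∃ (ν : ℝ) (y : Fin n → ℝ), y ≠ 0 ∧ B.mulVec y = ν • y ∧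
      ∀ x : Fin n → ℝ, x ⬝ᵥ B.mulVec x ≤ ν * (x ⬝ᵥ x) := by
  haveI : Nonempty (Fin n) := ⟨⟨0, hn⟩⟩
  obtain ⟨i₀, -, hmax⟩ := Finset.exists_max_image Finset.univ hB.eigenvalues
    ⟨Classical.arbitrary (Fin n), Finset.mem_univ _⟩
  set b := hB.eigenvectorBasis
  refine ⟨hB.eigenvalues i₀, b i₀, ?_, hB.mulVec_eigenvectorBasis i₀, ?_⟩
  · exact fun h => b.orthonormal.ne_zero i₀ (by ext j; exact congrFun h j)
  intro x
  set xe : EuclideanSpace ℝ (Fin n) := WithLp.toLp 2 x with hxe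
  have hsym : ∀ i, (b i : Fin n → ℝ) ⬝ᵥ B.mulVec x = hB.eigenvalues i * ((b i : Fin n → ℝ) ⬝ᵥ x) := by
    intro i
    rw [Matrix.dotProduct_mulVec, ← Matrix.mulVec_transpose]
    have : Bᵀ = B := by
      have := hB.eq; rwa [Matrix.conjTranspose_eq_transpose_of_trivial] at this
    have h2 : B *ᵥ (b i : Fin n → ℝ) = hB.eigenvalues i • (b i : Fin n → ℝ) :=
      hB.mulVec_eigenvectorBasis i
    rw [this, h2, smul_dotProduct]; rfl
  have key1 : x ⬝ᵥ B.mulVec x = ∑ i, hB.eigenvalues i * (((b i : Fin n → ℝ) ⬝ᵥ x) * ((b i : Fin n → ℝ) ⬝ᵥ x)) := by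
    have := b.sum_inner_mul_inner xe (WithLp.toLp 2 (B.mulVec x) : EuclideanSpace ℝ (Fin n))
    rw [real_inner_eq_dot] at this
    rw [← this]
    refine Finset.sum_congr rfl fun i _ => ?_
    rw [real_inner_eq_dot, real_inner_eq_dot, hsym i]
    have : (xe : Fin n → ℝ) ⬝ᵥ (b i : Fin n → ℝ) = (b i : Fin n → ℝ) ⬝ᵥ x := dotProduct_comm _ _
    rw [this]; ring
  have key2 : x ⬝ᵥ x = ∑ i, ((b i : Fin n → ℝ) ⬝ᵥ x) * ((b i : Fin n → ℝ) ⬝ᵥ x) := by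
    have := b.sum_inner_mul_inner xe xe
    rw [real_inner_eq_dot] at this
    rw [← this]
    refine Finset.sum_congr rfl fun i _ => ?_
    rw [real_inner_eq_dot, real_inner_eq_dot,
      dotProduct_comm (xe : Fin n → ℝ) (b i : Fin n → ℝ)]
  rw [key1, key2, Finset.mul_sum]
  refine Finset.sum_le_sum fun i _ => ?_
  exact mul_le_mul_of_nonneg_right (hmax i (Finset.mem_univ i)) (mul_self_nonneg _)

lemma comb_bound {n : ℕ} (hn : 2 ≤ n) {B : Matrix (Fin n) (Fin n) ℝ}
    (h0 : ∀ i, B i i = 0) (hnn : ∀ i j, 0 ≤ B i j) {ν : ℝ} (hν : 0 ≤ ν)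
    {y : Fin n → ℝ} (hy : y ≠ 0) (heig : B.mulVec y = ν • y) :
    ∃ u v : Fin n, u ≠ v ∧ ν ^ 2 ≤ (∑ w, B u w) * (∑ w, B v w) := by
  haveI : Nonempty (Fin n) := ⟨⟨0, by omega⟩⟩
  obtain ⟨u, -, hu⟩ := Finset.exists_max_image Finset.univ (fun i => |y i|)
    ⟨Classical.arbitrary (Fin n), Finset.mem_univ _⟩
  have hcard : 1 < Fintype.card (Fin n) := by simpa using (show 1 < n by omega)
  obtain ⟨v0, hv0⟩ := Fintype.exists_ne_of_one_lt_card hcard u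
  obtain ⟨v, hvmem, hv⟩ := Finset.exists_max_image (Finset.univ.erase u) (fun i => |y i|)
    ⟨v0, Finset.mem_erase.2 ⟨hv0, Finset.mem_univ _⟩⟩
  have hvu : v ≠ u := (Finset.mem_erase.1 hvmem).1
  have hru : 0 ≤ ∑ w, B u w := Finset.sum_nonneg fun w _ => hnn u w
  have hrv : 0 ≤ ∑ w, B v w := Finset.sum_nonneg fun w _ => hnn v w
  refine ⟨u, v, hvu.symm, ?_⟩
  have hmv : ∀ i, (B.mulVec y) i = ∑ w, B i w * y w := fun i => rfl
  by_cases hyv : |y v| = 0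
  · have hzero : ∀ w, w ≠ u → y w = 0 := by
      intro w hw
      have := hv w (Finset.mem_erase.2 ⟨hw, Finset.mem_univ _⟩)
      have : |y w| ≤ 0 := hyv ▸ this
      simpa [abs_nonpos_iff] using this
    have hyu : y u ≠ 0 := by
      intro h
      apply hy; funext w
      by_cases hw : w = u
      · simp [hw, h]
      · simp [hzero w hw]
    have h1 : (B.mulVec y) u = 0 := by
      rw [hmv]
      refine Finset.sum_eq_zero fun w _ => ?_
      by_cases hw : w = u
      · rw [hw, h0 u]; ring
      · rw [hzero w hw]; ring
    have h2 : (B.mulVec y) u = ν * y u := by rw [heig]; rfl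
    have : ν = 0 := by
      have := h1 ▸ h2
      field_simp at this
      rcases mul_eq_zero.1 (by linarith : ν * y u = 0) with h | h
      · exact h
      · exact absurd h hyu
    rw [this]
    simpa using mul_nonneg hru hrv
  · have hyvpos : 0 < |y v| := lt_of_le_of_ne (abs_nonneg _) (Ne.symm hyv)
    have hyupos : 0 < |y u| := lt_of_lt_of_le hyvpos (hu v (Finset.mem_univ v))
    have ineq1 : ν * |y u| ≤ (∑ w, B u w) * |y v| := by
      have e1 : ν * |y u| = |(B.mulVec y) u| := by
        rw [heig]
        show ν * |y u| = |ν * y u|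
        rw [abs_mul, abs_of_nonneg hν]
      rw [e1, hmv]
      calc |∑ w, B u w * y w| ≤ ∑ w, |B u w * y w| := Finset.abs_sum_le_sum_abs _ _
        _ = ∑ w, B u w * |y w| := by
            refine Finset.sum_congr rfl fun w _ => ?_
            rw [abs_mul, abs_of_nonneg (hnn u w)]
        _ ≤ ∑ w, B u w * |y v| := by
            refine Finset.sum_le_sum fun w _ => ?_
            by_cases hw : w = u
            · rw [hw, h0 u]; simp
            · exact mul_le_mul_of_nonneg_left
                (hv w (Finset.mem_erase.2 ⟨hw, Finset.mem_univ _⟩)) (hnn u w)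
        _ = (∑ w, B u w) * |y v| := by rw [Finset.sum_mul]
    have ineq2 : ν * |y v| ≤ (∑ w, B v w) * |y u| := by
      have e1 : ν * |y v| = |(B.mulVec y) v| := by
        rw [heig]
        show ν * |y v| = |ν * y v|
        rw [abs_mul, abs_of_nonneg hν]
      rw [e1, hmv]
      calc |∑ w, B v w * y w| ≤ ∑ w, |B v w * y w| := Finset.abs_sum_le_sum_abs _ _
        _ = ∑ w, B v w * |y w| := by
            refine Finset.sum_congr rfl fun w _ => ?_
            rw [abs_mul, abs_of_nonneg (hnn v w)]
        _ ≤ ∑ w, B v w * |y u| := by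
            refine Finset.sum_le_sum fun w _ =>
              mul_le_mul_of_nonneg_left (hu w (Finset.mem_univ w)) (hnn v w)
        _ = (∑ w, B v w) * |y u| := by rw [Finset.sum_mul]
    nlinarith [mul_pos hyupos hyvpos, mul_nonneg hν (abs_nonneg (y u)),
      mul_nonneg hru (abs_nonneg (y v))]

lemma adj_row_sum {n : ℕ} (H : SimpleGraph (Fin n)) [DecidableRel H.Adj] (u : Fin n) :
    ∑ w, H.adjMatrix ℝ u w = (H.degree u : ℝ) := by
  simp [SimpleGraph.adjMatrix_apply, Finset.sum_boole, SimpleGraph.degree,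
    SimpleGraph.neighborFinset_eq_filter]

lemma quad_identity {n : ℕ} (G : SimpleGraph (Fin n)) [DecidableRel G.Adj] (z : Fin n → ℝ) :
    z ⬝ᵥ (G.adjMatrix ℝ).mulVec z + z ⬝ᵥ z + z ⬝ᵥ (Gᶜ.adjMatrix ℝ).mulVec z
      = (∑ i, z i) ^ 2 := by
  rw [SimpleGraph.dotProduct_mulVec_adjMatrix, SimpleGraph.dotProduct_mulVec_adjMatrix]
  have hz : z ⬝ᵥ z = ∑ i, ∑ j, if i = j then z i * z j else 0 := by
    simp [dotProduct, Finset.sum_ite_eq]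
  rw [hz, sq, Finset.sum_mul_sum, ← Finset.sum_add_distrib, ← Finset.sum_add_distrib]
  refine Finset.sum_congr rfl fun i _ => ?_
  rw [← Finset.sum_add_distrib, ← Finset.sum_add_distrib]
  refine Finset.sum_congr rfl fun j _ => ?_
  by_cases hij : i = j
  · simp [hij]
  · by_cases hadj : G.Adj i j
    · simp [hij, hadj]
    · simp [hij, hadj, SimpleGraph.compl_adj, Ne.symm, fun h : j = i => hij h.symm]

end aux

/-- The second-smallest degree `δ²(G) = min_{i≠j} max(deg i, deg j)` of a graph. -/
noncomputable def secondMinDegree (n : ℕ) (G : SimpleGraph (Fin n)) [DecidableRel G.Adj] : ℕ :=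
  ⨅ p : {p : Fin n × Fin n // p.1 ≠ p.2}, max (G.degree p.1.1) (G.degree p.1.2)

/-- Bottom-two-degrees bound (shifted Brauer bound at shift x = 1): every eigenvalue `μ`
of the adjacency matrix of a simple graph on `n ≥ 2` vertices satisfies
`μ ≥ −1 − √((n − 1 − δ(G))(n − 1 − δ²(G)))`. -/
theorem adjacency_bottom_two_degree_bound (n : ℕ) (hn : 2 ≤ n) (G : SimpleGraph (Fin n))
    [DecidableRel G.Adj] (μ : ℝ) (hμ : μ ∈ spectrum ℝ (G.adjMatrix ℝ)) :
    -1 - Real.sqrt (((n : ℝ) - 1 - (G.minDegree : ℝ)) *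
      ((n : ℝ) - 1 - (secondMinDegree n G : ℝ))) ≤ μ := by
  set c₁ : ℝ := (n : ℝ) - 1 - (G.minDegree : ℝ) with hc₁
  set c₂ : ℝ := (n : ℝ) - 1 - (secondMinDegree n G : ℝ) with hc₂
  set S := Real.sqrt (c₁ * c₂) with hS
  set A := G.adjMatrix ℝ
  set B := (Gᶜ).adjMatrix ℝ with hB
  obtain ⟨x, hx0, hxeig⟩ := exists_eigenvec A hμ
  have hT : 0 < x ⬝ᵥ x := by
    rcases Function.ne_iff.1 hx0 with ⟨i, hi⟩
    rw [Pi.zero_apply] at hi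
    have h1 : 0 ≤ x ⬝ᵥ x := Finset.sum_nonneg fun w _ => mul_self_nonneg _
    rcases h1.lt_or_eq with h | h
    · exact h
    · exfalso
      have := (Finset.sum_eq_zero_iff_of_nonneg
        (fun w _ => mul_self_nonneg (x w))).1 h.symm i (Finset.mem_univ i)
      exact hi (by nlinarith [this])
  -- B is hermitian
  have hBH : B.IsHermitian := by
    rw [Matrix.IsHermitian, Matrix.conjTranspose_eq_transpose_of_trivial]
    exact SimpleGraph.isSymm_adjMatrix _
  obtain ⟨ν, y, hy0, hyeig, hray⟩ := rayleigh_max (by omega : 0 < n) hBH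
  -- bound the row sums of B
  have hdeg : ∀ u : Fin n, ∑ w, B u w = (n : ℝ) - 1 - (G.degree u : ℝ) := by
    intro u
    rw [hB, adj_row_sum]
    have hcompl : (Gᶜ).degree u = Fintype.card (Fin n) - 1 - G.degree u :=
      SimpleGraph.degree_compl G u
    have hlt : G.degree u < n := by simpa using G.degree_lt_card_verts u
    rw [hcompl]
    have : (Fintype.card (Fin n) - 1 - G.degree u : ℕ) = n - 1 - G.degree u := by simp
    rw [this]
    push_cast [Nat.cast_sub (by omega : G.degree u ≤ n - 1), Nat.cast_sub (by omega : 1 ≤ n)]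
    ring
  -- key: x ⬝ᵥ B.mulVec x ≤ S * (x ⬝ᵥ x)
  have hSnn : 0 ≤ S := Real.sqrt_nonneg _
  have hkey : x ⬝ᵥ B.mulVec x ≤ S * (x ⬝ᵥ x) := by
    rcases le_or_gt 0 ν with hν | hν
    · -- ν ≤ S via comb_bound
      obtain ⟨u, v, huv, hbound⟩ := comb_bound hn
        (fun i => by simp [hB]) (fun i j => by simp [hB, SimpleGraph.adjMatrix_apply]; positivity)
        hν hy0 hyeig
      have hru := hdeg u
      have hrv := hdeg v
      -- degrees
      have hδu : (G.minDegree : ℝ) ≤ (G.degree u : ℝ) := by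
        exact_mod_cast G.minDegree_le_degree u
      have hδv : (G.minDegree : ℝ) ≤ (G.degree v : ℝ) := by
        exact_mod_cast G.minDegree_le_degree v
      have hδ2 : (secondMinDegree n G : ℝ) ≤ max (G.degree u : ℝ) (G.degree v : ℝ) := by
        have h1 : secondMinDegree n G ≤ max (G.degree u) (G.degree v) :=
          ciInf_le (OrderBot.bddBelow _) (⟨(u, v), huv⟩ : {p : Fin n × Fin n // p.1 ≠ p.2})
        calc (secondMinDegree n G : ℝ) ≤ ((max (G.degree u) (G.degree v) : ℕ) : ℝ) := by
              exact_mod_cast h1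
          _ = max (G.degree u : ℝ) (G.degree v : ℝ) := by
              rcases le_total (G.degree u) (G.degree v) with h | h
              · rw [max_eq_right h, max_eq_right (by exact_mod_cast h)]
              · rw [max_eq_left h, max_eq_left (by exact_mod_cast h)]
      have hdu : (G.degree u : ℝ) ≤ (n : ℝ) - 1 := by
        have h' : G.degree u + 1 ≤ n := by simpa using G.degree_lt_card_verts u
        have : ((G.degree u : ℝ)) + 1 ≤ n := by exact_mod_cast h'
        linarith
      have hdv : (G.degree v : ℝ) ≤ (n : ℝ) - 1 := by
        have h' : G.degree v + 1 ≤ n := by simpa using G.degree_lt_card_verts v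
        have : ((G.degree v : ℝ)) + 1 ≤ n := by exact_mod_cast h'
        linarith
      have hprod : (∑ w, B u w) * (∑ w, B v w) ≤ c₁ * c₂ := by
        rw [hru, hrv, hc₁, hc₂]
        rcases le_total (G.degree u : ℝ) (G.degree v : ℝ) with h | h
        · -- deg u ≤ deg v : max = deg v
          rw [max_eq_right h] at hδ2
          have h1 : (n:ℝ) - 1 - (G.degree u : ℝ) ≤ (n:ℝ) - 1 - (G.minDegree : ℝ) := by linarith
          have h2 : (n:ℝ) - 1 - (G.degree v : ℝ) ≤ (n:ℝ) - 1 - (secondMinDegree n G : ℝ) := by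
            linarith
          have h3 : 0 ≤ (n:ℝ) - 1 - (G.degree v : ℝ) := by linarith
          have h4 : 0 ≤ (n:ℝ) - 1 - (G.minDegree : ℝ) := by linarith
          calc ((n:ℝ) - 1 - (G.degree u : ℝ)) * ((n:ℝ) - 1 - (G.degree v : ℝ))
              ≤ ((n:ℝ) - 1 - (G.minDegree : ℝ)) * ((n:ℝ) - 1 - (G.degree v : ℝ)) :=
                mul_le_mul_of_nonneg_right h1 h3
            _ ≤ ((n:ℝ) - 1 - (G.minDegree : ℝ)) * ((n:ℝ) - 1 - (secondMinDegree n G : ℝ)) :=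
                mul_le_mul_of_nonneg_left h2 h4
        · rw [max_eq_left h] at hδ2
          have h1 : (n:ℝ) - 1 - (G.degree v : ℝ) ≤ (n:ℝ) - 1 - (G.minDegree : ℝ) := by linarith
          have h2 : (n:ℝ) - 1 - (G.degree u : ℝ) ≤ (n:ℝ) - 1 - (secondMinDegree n G : ℝ) := by
            linarith
          have h3 : 0 ≤ (n:ℝ) - 1 - (G.degree u : ℝ) := by linarith
          have h4 : 0 ≤ (n:ℝ) - 1 - (G.minDegree : ℝ) := by linarith
          calc ((n:ℝ) - 1 - (G.degree u : ℝ)) * ((n:ℝ) - 1 - (G.degree v : ℝ))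
              = ((n:ℝ) - 1 - (G.degree v : ℝ)) * ((n:ℝ) - 1 - (G.degree u : ℝ)) := by ring
            _ ≤ ((n:ℝ) - 1 - (G.minDegree : ℝ)) * ((n:ℝ) - 1 - (G.degree u : ℝ)) :=
                mul_le_mul_of_nonneg_right h1 h3
            _ ≤ ((n:ℝ) - 1 - (G.minDegree : ℝ)) * ((n:ℝ) - 1 - (secondMinDegree n G : ℝ)) :=
                mul_le_mul_of_nonneg_left h2 h4
      have hνS : ν ≤ S := by
        rw [hS]
        rw [show ν = Real.sqrt (ν ^ 2) from (Real.sqrt_sq hν).symm]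
        exact Real.sqrt_le_sqrt (le_trans hbound hprod)
      calc x ⬝ᵥ B.mulVec x ≤ ν * (x ⬝ᵥ x) := hray x
        _ ≤ S * (x ⬝ᵥ x) := mul_le_mul_of_nonneg_right hνS hT.le
    · calc x ⬝ᵥ B.mulVec x ≤ ν * (x ⬝ᵥ x) := hray x
        _ ≤ 0 := mul_nonpos_of_nonpos_of_nonneg hν.le hT.le
        _ ≤ S * (x ⬝ᵥ x) := mul_nonneg hSnn hT.le
  -- main identity
  have hq := quad_identity G x
  have hAx : x ⬝ᵥ A.mulVec x = μ * (x ⬝ᵥ x) := by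
    rw [hxeig, dotProduct_smul]; rfl
  have hsq : 0 ≤ (∑ i, x i) ^ 2 := sq_nonneg _
  nlinarith [hkey, hT, hq, hAx, hsq]
end

section
/- Let G be a simple graph on n ≥ 2 vertices with adjacency matrix A(G). Then every eigenvalue λ of A(G) satisfies λ ≥ (δ(G) + δ²(G))/2 − n, where δ(G) is the minimum degree and δ²(G) the second-smallest degree of G. (This is the averaged shifted Gershgorin bound at shift x = 1, using the average of the two smallest degrees.) -/
open Matrix Finset in
private lemma gershKey {n : ℕ} (hn : 2 ≤ n) (G : SimpleGraph (Fin n)) [DecidableRel G.Adj]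
    (lam : ℝ) (v : Fin n → ℝ) (hv : v ≠ 0)
    (heig : (Matrix.of (fun _ _ => (1:ℝ)) - G.adjMatrix ℝ) *ᵥ v = lam • v) :
    lam ≤ n - ((G.minDegree : ℝ) + (secondMinDegree n G : ℝ)) / 2 := by
  set M : Matrix (Fin n) (Fin n) ℝ := Matrix.of (fun _ _ => (1:ℝ)) - G.adjMatrix ℝ with hMdef
  have hM0 : ∀ p q, 0 ≤ M p q := by
    intro p q
    simp only [hMdef, Matrix.sub_apply, Matrix.of_apply, SimpleGraph.adjMatrix_apply]
    split <;> norm_num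
  have hM1 : ∀ p q, M p q ≤ 1 := by
    intro p q
    simp only [hMdef, Matrix.sub_apply, Matrix.of_apply, SimpleGraph.adjMatrix_apply]
    split <;> norm_num
  have hMd : ∀ p, M p p = 1 := by
    intro p
    simp [hMdef]
  have hrow : ∀ p, ∑ k, M p k = (n : ℝ) - G.degree p := by
    intro p
    simp only [hMdef, Matrix.sub_apply, Matrix.of_apply, Finset.sum_sub_distrib]
    have h1 : ∑ k, (G.adjMatrix ℝ) p k = (G.degree p : ℝ) := by
      simp [SimpleGraph.adjMatrix_apply, SimpleGraph.degree, SimpleGraph.neighborFinset_eq_filter,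
        Finset.sum_boole]
    rw [h1]
    simp
  set w : Fin n → ℝ := fun k => |v k| with hw
  haveI : Nonempty (Fin n) := Fin.pos_iff_nonempty.mp (by omega)
  obtain ⟨i, -, hi⟩ := Finset.exists_max_image Finset.univ w Finset.univ_nonempty
  have herne : (Finset.univ.erase i).Nonempty := by
    rw [← Finset.card_pos, Finset.card_erase_of_mem (Finset.mem_univ i)]
    simp [Fintype.card_fin]; omega
  obtain ⟨j, hjmem, hj⟩ := Finset.exists_max_image (Finset.univ.erase i) w herne
  have hji : j ≠ i := (Finset.mem_erase.mp hjmem).1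
  have ha : ∀ k, w k ≤ w i := fun k => hi k (Finset.mem_univ k)
  have hb : ∀ k, k ≠ i → w k ≤ w j := fun k hk => hj k (Finset.mem_erase.mpr ⟨hk, Finset.mem_univ k⟩)
  have hba : w j ≤ w i := ha j
  have hb0 : 0 ≤ w j := abs_nonneg _
  have hwpos : 0 < w i := by
    obtain ⟨k, hk⟩ := Function.ne_iff.mp hv
    exact lt_of_lt_of_le (abs_pos.mpr hk) (ha k)
  have habs : ∀ p, lam * w p ≤ ∑ k, M p k * w k := by
    intro p
    calc lam * w p ≤ |lam| * |v p| := mul_le_mul_of_nonneg_right (le_abs_self lam) (abs_nonneg _)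
      _ = |(M *ᵥ v) p| := by rw [heig]; simp [abs_mul]
      _ ≤ ∑ k, |M p k * v k| := by
          rw [Matrix.mulVec, dotProduct]
          exact Finset.abs_sum_le_sum_abs _ _
      _ = ∑ k, M p k * w k := by
          refine Finset.sum_congr rfl fun k _ => ?_
          rw [abs_mul, abs_of_nonneg (hM0 p k)]
  -- degrees as reals
  set di : ℝ := (G.degree i : ℝ)
  set dj : ℝ := (G.degree j : ℝ)
  set m : ℝ := M j i with hm
  have hmij : M i j = m := by
    simp only [hMdef, hm, Matrix.sub_apply, Matrix.of_apply, SimpleGraph.adjMatrix_apply]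
    simp only [G.adj_comm i j]
  -- row sum over erase i
  have hsum_i : ∑ k ∈ Finset.univ.erase i, M i k = ((n:ℝ) - di) - 1 := by
    have := Finset.add_sum_erase Finset.univ (fun k => M i k) (Finset.mem_univ i)
    rw [hrow i, hMd i] at this
    linarith
  have hsum_j : ∑ k ∈ Finset.univ.erase j, M j k = ((n:ℝ) - dj) - 1 := by
    have := Finset.add_sum_erase Finset.univ (fun k => M j k) (Finset.mem_univ j)
    rw [hrow j, hMd j] at this
    linarith
  have hsum_j2 : ∑ k ∈ (Finset.univ.erase j).erase i, M j k = ((n:ℝ) - dj) - 1 - m := by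
    have hmem : i ∈ Finset.univ.erase j := Finset.mem_erase.mpr ⟨fun h => hji h.symm, Finset.mem_univ i⟩
    have := Finset.add_sum_erase (Finset.univ.erase j) (fun k => M j k) hmem
    rw [hsum_j] at this
    linarith [this]
  have hsum_i2 : ∑ k ∈ (Finset.univ.erase i).erase j, M i k = ((n:ℝ) - di) - 1 - m := by
    have := Finset.add_sum_erase (Finset.univ.erase i) (fun k => M i k) hjmem
    rw [hsum_i, hmij] at this
    linarith [this]
  have hRi : 1 + m ≤ (n:ℝ) - di := by
    have : 0 ≤ ∑ k ∈ (Finset.univ.erase i).erase j, M i k :=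
      Finset.sum_nonneg fun k _ => hM0 i k
    rw [hsum_i2] at this; linarith
  have hRj : 1 + m ≤ (n:ℝ) - dj := by
    have : 0 ≤ ∑ k ∈ (Finset.univ.erase j).erase i, M j k :=
      Finset.sum_nonneg fun k _ => hM0 j k
    rw [hsum_j2] at this; linarith
  have hm0 : 0 ≤ m := hM0 j i
  -- Ineq 1
  have h1 : lam * w i ≤ w i + (((n:ℝ) - di) - 1) * w j := by
    refine le_trans (habs i) ?_
    rw [← Finset.add_sum_erase Finset.univ (fun k => M i k * w k) (Finset.mem_univ i), hMd i,
      one_mul]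
    have : ∑ k ∈ Finset.univ.erase i, M i k * w k ≤ ∑ k ∈ Finset.univ.erase i, M i k * w j := by
      refine Finset.sum_le_sum fun k hk => ?_
      exact mul_le_mul_of_nonneg_left (hb k (Finset.mem_erase.mp hk).1) (hM0 i k)
    rw [← Finset.sum_mul, hsum_i] at this
    linarith
  -- Ineq 2
  have h2 : lam * w j ≤ w j + m * w i + (((n:ℝ) - dj) - 1 - m) * w j := by
    refine le_trans (habs j) ?_
    rw [← Finset.add_sum_erase Finset.univ (fun k => M j k * w k) (Finset.mem_univ j), hMd j,
      one_mul]
    have hmem : i ∈ Finset.univ.erase j := Finset.mem_erase.mpr ⟨fun h => hji h.symm, Finset.mem_univ i⟩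
    rw [← Finset.add_sum_erase (Finset.univ.erase j) (fun k => M j k * w k) hmem]
    have : ∑ k ∈ (Finset.univ.erase j).erase i, M j k * w k ≤
        ∑ k ∈ (Finset.univ.erase j).erase i, M j k * w j := by
      refine Finset.sum_le_sum fun k hk => ?_
      exact mul_le_mul_of_nonneg_left (hb k (Finset.mem_erase.mp hk).1) (hM0 j k)
    rw [← Finset.sum_mul, hsum_j2] at this
    linarith
  -- lam ≤ ((n - di) + (n - dj))/2
  have hkey : lam ≤ (((n:ℝ) - di) + ((n:ℝ) - dj)) / 2 := by
    nlinarith [mul_nonneg (by linarith : (0:ℝ) ≤ ((n:ℝ) - di) + ((n:ℝ) - dj) - 2 - 2*m)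
      (by linarith : (0:ℝ) ≤ w i - w j), hwpos, hb0, h1, h2]
  -- degree comparison
  have hdeg : (G.minDegree : ℝ) + (secondMinDegree n G : ℝ) ≤ di + dj := by
    have h1' : G.minDegree ≤ min (G.degree i) (G.degree j) :=
      le_min (G.minDegree_le_degree i) (G.minDegree_le_degree j)
    have h2' : secondMinDegree n G ≤ max (G.degree i) (G.degree j) :=
      ciInf_le' _ (⟨(i, j), fun h => hji h.symm⟩ : {p : Fin n × Fin n // p.1 ≠ p.2})
    have := add_le_add h1' h2'
    rw [min_add_max] at this
    have := (Nat.cast_le (α := ℝ)).mpr this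
    push_cast at this ⊢
    linarith
  linarith

open Matrix Finset in
/-- Averaged shifted Gershgorin bound at shift x = 1: every eigenvalue `μ` of the adjacency
matrix of a simple graph on `n ≥ 2` vertices satisfies `μ ≥ (δ(G) + δ²(G))/2 − n`. -/
theorem adjacency_average_bottom_two_degree_bound (n : ℕ) (hn : 2 ≤ n)
    (G : SimpleGraph (Fin n)) [DecidableRel G.Adj]
    (μ : ℝ) (hμ : μ ∈ spectrum ℝ (G.adjMatrix ℝ)) :
    ((G.minDegree : ℝ) + (secondMinDegree n G : ℝ)) / 2 - n ≤ μ := by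
  classical
  set M : Matrix (Fin n) (Fin n) ℝ := Matrix.of (fun _ _ => (1:ℝ)) - G.adjMatrix ℝ with hMdef
  set C : ℝ := n - ((G.minDegree : ℝ) + (secondMinDegree n G : ℝ)) / 2 with hC
  have hNherm : (C • (1 : Matrix (Fin n) (Fin n) ℝ) - M).IsHermitian := by
    unfold Matrix.IsHermitian
    ext i j
    simp [hMdef, Matrix.conjTranspose_apply, Matrix.one_apply, SimpleGraph.adjMatrix_apply,
      G.adj_comm i j, eq_comm]
  have hNpsd : (C • (1 : Matrix (Fin n) (Fin n) ℝ) - M).PosSemidef := by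
    apply hNherm.posSemidef_iff_eigenvalues_nonneg.mpr
    intro i; show (0:ℝ) ≤ hNherm.eigenvalues i
    set u : Fin n → ℝ := ⇑(hNherm.eigenvectorBasis i) with hu
    have hune : u ≠ 0 := by
      intro h
      apply hNherm.eigenvectorBasis.orthonormal.ne_zero i
      ext k
      exact congrFun h k
    have heq := hNherm.mulVec_eigenvectorBasis i
    have hMu : M *ᵥ u = (C - hNherm.eigenvalues i) • u := by
      have h2 : (C • (1 : Matrix (Fin n) (Fin n) ℝ) - M) *ᵥ u = C • u - M *ᵥ u := by
        rw [Matrix.sub_mulVec, Matrix.smul_mulVec, Matrix.one_mulVec]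
      rw [h2] at heq
      have h3 : M *ᵥ u = C • u - hNherm.eigenvalues i • u := by
        rw [← heq]; module
      rw [h3]; exact (sub_smul _ _ _).symm
    have := gershKey hn G (C - hNherm.eigenvalues i) u hune hMu
    rw [← hC] at this
    linarith
  obtain ⟨v, hv0, hAv⟩ : ∃ v : Fin n → ℝ, v ≠ 0 ∧ (G.adjMatrix ℝ) *ᵥ v = μ • v := by
    rw [← AlgEquiv.spectrum_eq (Matrix.toLinAlgEquiv' (R := ℝ) (n := Fin n)),
      ← Module.End.hasEigenvalue_iff_mem_spectrum] at hμ
    obtain ⟨v, hv⟩ := hμ.exists_hasEigenvector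
    refine ⟨v, hv.right, ?_⟩
    have := hv.apply_eq_smul
    rwa [Matrix.toLinAlgEquiv'_apply] at this
  have hq := hNpsd.dotProduct_mulVec_nonneg v
  have hstar : star v = v := by ext k; simp
  rw [hstar] at hq
  have hsub : (C • (1 : Matrix (Fin n) (Fin n) ℝ) - M) *ᵥ v = C • v - M *ᵥ v := by
    rw [Matrix.sub_mulVec, Matrix.smul_mulVec, Matrix.one_mulVec]
  rw [hsub, dotProduct_sub] at hq
  have hJv : v ⬝ᵥ ((Matrix.of (fun _ _ => (1:ℝ)) : Matrix (Fin n) (Fin n) ℝ) *ᵥ v)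
      = (∑ k, v k) ^ 2 := by
    simp only [Matrix.mulVec, dotProduct, Matrix.of_apply, one_mul]
    rw [← Finset.sum_mul, sq]
  have hMv : v ⬝ᵥ (M *ᵥ v) = (∑ k, v k) ^ 2 - μ * (v ⬝ᵥ v) := by
    rw [hMdef, Matrix.sub_mulVec, dotProduct_sub, hAv, dotProduct_smul, hJv,
      smul_eq_mul]
  have hCv : v ⬝ᵥ (C • v) = C * (v ⬝ᵥ v) := by
    rw [dotProduct_smul, smul_eq_mul]
  have hvv : 0 < v ⬝ᵥ v := by
    obtain ⟨k, hk⟩ := Function.ne_iff.mp hv0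
    exact Finset.sum_pos' (fun k _ => mul_self_nonneg _)
      ⟨k, Finset.mem_univ k, mul_self_pos.mpr hk⟩
  rw [hMv, hCv] at hq
  have hCneg : -C = ((G.minDegree : ℝ) + (secondMinDegree n G : ℝ)) / 2 - n := by
    rw [hC]; ring
  rw [← hCneg]
  nlinarith [sq_nonneg (∑ k, v k), hvv, hq]
end

section
/- Let m ≥ 1 and let y_1,…,y_m be nonnegative reals with Σ_{k=1}^m y_k = ρ. Then for every real x ≥ 0, ρ − x − Σ_{k=1}^m |y_k − x| ≤ ρ(m−1)/m, so that sup_{x≥0}(ρ − x − Σ_k |y_k − x|) ≤ ρ(m−1)/m. Moreover, if y_k = ρ/m for every k, then taking x = ρ/m attains equality, so the supremum equals ρ(m−1)/m in that case. (In other words, among all vectors of m nonnegative off-diagonal entries with fixed row sum ρ, the evenly spread vector maximizes the shifted Gershgorin diagonal dominance, with maximal value ρ(m−1)/m.) -/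
/-- Among vectors of `m` nonnegative off-diagonal entries with fixed sum `ρ`, the shifted
diagonal dominance `ρ − x − Σ_k |y_k − x|` is at most `ρ(m−1)/m` for every shift `x ≥ 0`,
so its supremum over `x ≥ 0` is at most `ρ(m−1)/m`; and if all entries equal `ρ/m`, the
shift `x = ρ/m` attains this value, so the supremum equals `ρ(m−1)/m` in that case. -/
theorem spread_maximizes_shifted_dominance (m : ℕ) (hm : 1 ≤ m)
    (y : Fin m → ℝ) (hy : ∀ k, 0 ≤ y k) (ρ : ℝ) (hsum : ∑ k, y k = ρ) :
    (∀ x : ℝ, 0 ≤ x → ρ - x - ∑ k, |y k - x| ≤ ρ * ((m : ℝ) - 1) / m) ∧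
    ((⨆ x : {x : ℝ // 0 ≤ x}, (ρ - x.1 - ∑ k, |y k - x.1|)) ≤ ρ * ((m : ℝ) - 1) / m) ∧
    ((∀ k, y k = ρ / m) →
      (ρ - ρ / m - ∑ k, |y k - ρ / m| = ρ * ((m : ℝ) - 1) / m) ∧
      (⨆ x : {x : ℝ // 0 ≤ x}, (ρ - x.1 - ∑ k, |y k - x.1|)) = ρ * ((m : ℝ) - 1) / m) := by
  have hρ : 0 ≤ ρ := hsum ▸ Finset.sum_nonneg fun k _ => hy k
  have hm' : (1 : ℝ) ≤ (m : ℝ) := by exact_mod_cast hm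
  have hm0 : (0 : ℝ) < (m : ℝ) := by linarith
  have hbound : ∀ x : ℝ, 0 ≤ x → ρ - x - ∑ k, |y k - x| ≤ ρ * ((m : ℝ) - 1) / m := by
    intro x hx
    rcases le_total x (ρ / m) with h | h
    · have h1 : ∑ k, (y k - x) ≤ ∑ k, |y k - x| :=
        Finset.sum_le_sum fun k _ => le_abs_self _
      have h2 : ∑ k, (y k - x) = ρ - m * x := by
        rw [Finset.sum_sub_distrib, hsum, Finset.sum_const]
        simp [mul_comm]
      rw [h2] at h1
      have : ρ - x - ∑ k, |y k - x| ≤ ((m : ℝ) - 1) * x := by linarith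
      calc ρ - x - ∑ k, |y k - x| ≤ ((m : ℝ) - 1) * x := this
        _ ≤ ((m : ℝ) - 1) * (ρ / m) := by
            apply mul_le_mul_of_nonneg_left h (by linarith)
        _ = ρ * ((m : ℝ) - 1) / m := by ring
    · have h1 : ∑ k, (x - y k) ≤ ∑ k, |y k - x| :=
        Finset.sum_le_sum fun k _ => by rw [abs_sub_comm]; exact le_abs_self _
      have h2 : ∑ k, (x - y k) = m * x - ρ := by
        rw [Finset.sum_sub_distrib, hsum, Finset.sum_const]
        simp [mul_comm]
      rw [h2] at h1
      have h3 : ρ / m ≤ x := h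
      have h4 : ρ ≤ m * x := by
        have := mul_le_mul_of_nonneg_left h3 (le_of_lt hm0)
        rwa [mul_div_cancel₀ _ (ne_of_gt hm0)] at this
      have : ρ - x - ∑ k, |y k - x| ≤ 2 * ρ - ((m : ℝ) + 1) * x := by linarith
      calc ρ - x - ∑ k, |y k - x| ≤ 2 * ρ - ((m : ℝ) + 1) * x := this
        _ ≤ 2 * ρ - ((m : ℝ) + 1) * (ρ / m) := by
            have := mul_le_mul_of_nonneg_left h3 (by linarith : (0:ℝ) ≤ (m:ℝ) + 1)
            linarith
        _ = ρ * ((m : ℝ) - 1) / m := by field_simp; ring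
  have hbdd : BddAbove (Set.range fun x : {x : ℝ // 0 ≤ x} =>
      ρ - x.1 - ∑ k, |y k - x.1|) := by
    refine ⟨ρ * ((m : ℝ) - 1) / m, ?_⟩
    rintro _ ⟨x, rfl⟩
    exact hbound x.1 x.2
  have hsup : (⨆ x : {x : ℝ // 0 ≤ x}, (ρ - x.1 - ∑ k, |y k - x.1|)) ≤
      ρ * ((m : ℝ) - 1) / m :=
    ciSup_le fun x => hbound x.1 x.2
  refine ⟨hbound, hsup, fun heq => ?_⟩
  have hval : ρ - ρ / m - ∑ k, |y k - ρ / m| = ρ * ((m : ℝ) - 1) / m := by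
    have : ∀ k : Fin m, |y k - ρ / m| = 0 := fun k => by rw [heq k]; simp
    rw [Finset.sum_congr rfl fun k _ => this k]
    simp
    field_simp
  refine ⟨hval, le_antisymm hsup ?_⟩
  have hx0 : 0 ≤ ρ / m := div_nonneg hρ (le_of_lt hm0)
  have := le_ciSup hbdd (⟨ρ / m, hx0⟩ : {x : ℝ // 0 ≤ x})
  rw [hval] at this
  exact this
end
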